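/- arXiv:1403.1960 — 9 statements merged into one kernel-verified Lean document; each statement's English description precedes it below -/
import Mathlib

section
/- Let A be a 2×2 complex matrix whose eigenvalues both lie in the closed unit disc. Then the operator norm of A is strictly less than 1 if and only if det(I - A*A) > 0. -/
open ComplexOrder Matrix
open scoped NNReal ENNReal Matrix.Norms.L2Operator

section AuxLemmas
variable {n : Type*} [Fintype n] [DecidableEq n]

lemma aux_charmatrix_map_eval (A : Matrix n n ℂ) (μ : ℂ) :
    (charmatrix A).map (Polynomial.evalRingHom μ) = algebraMap ℂ (Matrix n n ℂ) μ - A := by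
  ext i j
  rcases eq_or_ne i j with rfl | hij
  · simp [charmatrix_apply_eq, Matrix.algebraMap_eq_diagonal]
  · simp [charmatrix_apply_ne _ _ _ hij, Matrix.algebraMap_eq_diagonal, Matrix.diagonal_apply_ne _ hij]

lemma aux_root_mem_spectrum (A : Matrix n n ℂ) {μ : ℂ}
    (hμ : μ ∈ A.charpoly.roots) : μ ∈ spectrum ℂ A := by
  have h0 : A.charpoly.eval μ = 0 :=
    (Polynomial.mem_roots A.charpoly_monic.ne_zero).mp hμ
  rw [spectrum.mem_iff]
  intro hu
  have hdet : (algebraMap ℂ (Matrix n n ℂ) μ - A).det = A.charpoly.eval μ := by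
    rw [← aux_charmatrix_map_eval A μ]
    exact (RingHom.map_det (Polynomial.evalRingHom μ) (charmatrix A)).symm
  have := (Matrix.isUnit_iff_isUnit_det _).mp hu
  rw [hdet, h0] at this
  exact not_isUnit_zero this

lemma aux_nnnorm_det_le_one (A : Matrix n n ℂ)
    (h : ∀ z ∈ spectrum ℂ A, ‖z‖ ≤ 1) : ‖A.det‖₊ ≤ 1 := by
  rw [Matrix.det_eq_prod_roots_charpoly]
  have heq : ‖A.charpoly.roots.prod‖₊ = (A.charpoly.roots.map (fun z => ‖z‖₊)).prod := by
    simpa using (Multiset.prod_hom A.charpoly.roots (nnnormHom : ℂ →*₀ ℝ≥0).toMonoidHom).symm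
  rw [heq]
  calc (A.charpoly.roots.map (fun z => ‖z‖₊)).prod
      ≤ 1 ^ Multiset.card (A.charpoly.roots.map (fun z => ‖z‖₊)) := by
        apply Multiset.prod_le_pow_card
        intro x hx
        obtain ⟨z, hz, rfl⟩ := Multiset.mem_map.mp hx
        have := h z (aux_root_mem_spectrum A hz)
        rw [← NNReal.coe_le_coe, coe_nnnorm, NNReal.coe_one]; exact this
    _ = 1 := one_pow _

end AuxLemmas

noncomputable instance auxCStarAlgebraMatrix : CStarAlgebra (Matrix (Fin 2) (Fin 2) ℂ) :=
  { Matrix.instL2OpNormedRing, (Matrix.instL2OpNormedAlgebra : NormedAlgebra ℂ _),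
    (inferInstance : StarRing (Matrix (Fin 2) (Fin 2) ℂ)), Matrix.instCStarRing,
    (inferInstance : CompleteSpace (Matrix (Fin 2) (Fin 2) ℂ)),
    (inferInstance : StarModule ℂ (Matrix (Fin 2) (Fin 2) ℂ)) with }

/-- The operator norm of a 2×2 complex matrix acting on Euclidean ℂ². -/
noncomputable def opNorm (A : Matrix (Fin 2) (Fin 2) ℂ) : ℝ :=
  ‖Matrix.toEuclideanCLM (𝕜 := ℂ) A‖

theorem stmt_0 (A : Matrix (Fin 2) (Fin 2) ℂ)
    (h : ∀ z ∈ spectrum ℂ A, ‖z‖ ≤ 1) :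
    opNorm A < 1 ↔ 0 < (1 - Aᴴ * A).det := by
  set B := Aᴴ * A with hBdef
  have hB : B.PosSemidef := posSemidef_conjTranspose_mul_self A
  have hH : B.IsHermitian := hB.1
  set e : Fin 2 → ℝ := hH.eigenvalues with he
  have he0 : ∀ i, 0 ≤ e i := hB.eigenvalues_nonneg
  set U : Matrix (Fin 2) (Fin 2) ℂ := (hH.eigenvectorUnitary : Matrix (Fin 2) (Fin 2) ℂ) with hUdef
  have hU : U * star U = 1 := mem_unitaryGroup_iff.mp hH.eigenvectorUnitary.2
  have hspec : spectrum ℂ B = Set.range (fun i => (e i : ℂ)) := by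
    conv_lhs => rw [hH.spectral_theorem, Unitary.conjStarAlgAut_apply, Unitary.spectrum_star_right_conjugate]
    rw [spectrum_diagonal]
    ext x
    simp [Function.comp]
    rfl
  have hsplit : 1 - B = U * (1 - diagonal (RCLike.ofReal ∘ e)) * star U := by
    rw [mul_sub, sub_mul, mul_one, hU]
    congr 1
    exact hH.spectral_theorem
  have h2 : (1 - diagonal (RCLike.ofReal ∘ e) : Matrix (Fin 2) (Fin 2) ℂ).det
      = (((1 - e 0) * (1 - e 1) : ℝ) : ℂ) := by
    rw [← diagonal_one, diagonal_sub, det_diagonal, Fin.prod_univ_two]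
    show (1 - ((e 0 : ℝ) : ℂ)) * (1 - ((e 1 : ℝ) : ℂ)) = _
    push_cast
    ring
  have hdet1 : (1 - B).det = (((1 - e 0) * (1 - e 1) : ℝ) : ℂ) := by
    rw [hsplit, det_mul, det_mul, mul_right_comm, ← det_mul, hU, det_one, one_mul, h2]
  have hnormB : ‖B‖ = ‖A‖ * ‖A‖ := l2_opNorm_conjTranspose_mul_self A
  have hopA : opNorm A = ‖A‖ := rfl
  haveI : NormOneClass (Matrix (Fin 2) (Fin 2) ℂ) := ⟨CStarRing.norm_one⟩
  rw [hdet1, hopA, Complex.zero_lt_real]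
  constructor
  · intro hlt
    have hBlt : ‖B‖ < 1 := by nlinarith [norm_nonneg A]
    have hei : ∀ i, e i < 1 := by
      intro i
      have hmem : (e i : ℂ) ∈ spectrum ℂ B := by rw [hspec]; exact ⟨i, rfl⟩
      have hle := spectrum.norm_le_norm_of_mem hmem
      rw [Complex.norm_real] at hle
      calc e i ≤ |e i| := le_abs_self _
        _ ≤ ‖B‖ := hle
        _ < 1 := hBlt
    nlinarith [hei 0, hei 1]
  · intro hpos
    have hprod : e 0 * e 1 ≤ 1 := by
      have hd : ‖B.det‖₊ ≤ 1 := by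
        rw [hBdef, det_mul, det_conjTranspose, nnnorm_mul, nnnorm_star]
        calc ‖A.det‖₊ * ‖A.det‖₊ ≤ 1 * 1 :=
              mul_le_mul' (aux_nnnorm_det_le_one A h) (aux_nnnorm_det_le_one A h)
          _ = 1 := one_mul 1
      have hdR : ‖B.det‖ ≤ 1 := hd
      have hBdet : ‖B.det‖ = e 0 * e 1 := by
        rw [hH.det_eq_prod_eigenvalues, Fin.prod_univ_two, norm_mul]
        simp [Complex.norm_real, abs_of_nonneg (he0 0), abs_of_nonneg (he0 1)]
        exact congrArg₂ (· * ·) (abs_of_nonneg (he0 0)) (abs_of_nonneg (he0 1))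
      linarith [hBdet ▸ hdR]
    have hei0 : e 0 < 1 := by nlinarith [he0 0, he0 1]
    have hei1 : e 1 < 1 := by nlinarith [he0 0, he0 1]
    have hei : ∀ i : Fin 2, e i < 1 := by
      intro i
      fin_cases i
      · exact hei0
      · exact hei1
    have hsa : IsSelfAdjoint B := hH
    have hrad := hsa.spectralRadius_eq_nnnorm
    set c : ℝ≥0 := ‖((e 0 : ℝ) : ℂ)‖₊ ⊔ ‖((e 1 : ℝ) : ℂ)‖₊ with hc
    have hclt : c < 1 := by
      have hlt1 : ∀ i : Fin 2, ‖((e i : ℝ) : ℂ)‖₊ < 1 := by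
        intro i
        rw [← NNReal.coe_lt_coe]
        push_cast
        rw [Complex.norm_real, Real.norm_eq_abs, abs_of_nonneg (he0 i)]
        exact hei i
      exact sup_lt_iff.mpr ⟨hlt1 0, hlt1 1⟩
    have hle2 : spectralRadius ℂ B ≤ (c : ℝ≥0∞) := by
      show (⨆ k ∈ spectrum ℂ B, (‖k‖₊ : ℝ≥0∞)) ≤ (c : ℝ≥0∞)
      apply iSup₂_le
      intro k hk
      rw [hspec] at hk
      obtain ⟨i, rfl⟩ := hk
      fin_cases i
      · exact ENNReal.coe_le_coe.mpr le_sup_left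
      · exact ENNReal.coe_le_coe.mpr le_sup_right
    rw [hrad] at hle2
    have hBle : ‖B‖₊ ≤ c := ENNReal.coe_le_coe.mp hle2
    have hBlt : ‖B‖ < 1 := lt_of_le_of_lt hBle hclt
    nlinarith [norm_nonneg A]
end

section
/- Let λ₁, λ₂ be in the open unit disc, s = λ₁+λ₂, p = λ₁λ₂, and β = (s - conj(s)p)/(1-|p|²). Then |1 - ½ s conj(β)/(1 + √(1-|β|²))| = ½|1 - conj(λ₂)λ₁| + ½(1-|λ₁|²)^{1/2}(1-|λ₂|²)^{1/2}. -/
set_option maxHeartbeats 1000000 in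
theorem stmt_4 (l₁ l₂ : ℂ) (h1 : ‖l₁‖ < 1) (h2 : ‖l₂‖ < 1)
    (s p β : ℂ)
    (hs : s = l₁ + l₂) (hp : p = l₁ * l₂)
    (hβ : β = (s - (starRingEnd ℂ) s * p) / (1 - ‖p‖ ^ 2)) :
    ‖1 - s * (starRingEnd ℂ) β / (2 * (1 + (Real.sqrt (1 - ‖β‖ ^ 2) : ℂ)))‖ =
      ‖1 - (starRingEnd ℂ) l₂ * l₁‖ / 2
        + Real.sqrt (1 - ‖l₁‖ ^ 2) * Real.sqrt (1 - ‖l₂‖ ^ 2) / 2 := by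
  have nsq : ∀ z : ℂ, ‖z‖ ^ 2 = Complex.normSq z := fun z => by
    rw [Complex.sq_norm]
  have hn1 : (0:ℝ) ≤ ‖l₁‖ := norm_nonneg _
  have hn2 : (0:ℝ) ≤ ‖l₂‖ := norm_nonneg _
  set u : ℝ := 1 - ‖l₁‖ ^ 2 with hu_def
  set v : ℝ := 1 - ‖l₂‖ ^ 2 with hv_def
  have hu : 0 < u := by nlinarith
  have hv : 0 < v := by nlinarith
  set su : ℝ := Real.sqrt u with hsu_def
  set sv : ℝ := Real.sqrt v with hsv_def
  have hsu2 : su ^ 2 = u := Real.sq_sqrt hu.le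
  have hsv2 : sv ^ 2 = v := Real.sq_sqrt hv.le
  have hsu0 : 0 ≤ su := Real.sqrt_nonneg _
  have hsv0 : 0 ≤ sv := Real.sqrt_nonneg _
  set w : ℂ := 1 - (starRingEnd ℂ) l₂ * l₁ with hw_def
  set m : ℝ := ‖w‖ with hm_def
  have hm0 : 0 ≤ m := norm_nonneg _
  set x : ℝ := w.re with hx_def
  set y : ℝ := w.im with hy_def
  have hm2 : m ^ 2 = x ^ 2 + y ^ 2 := by
    rw [hm_def, nsq, Complex.normSq_apply, hx_def, hy_def]; ring
  have hx0 : 0 < x := by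
    have h3 : ((starRingEnd ℂ) l₂ * l₁).re ≤ ‖(starRingEnd ℂ) l₂ * l₁‖ :=
      Complex.re_le_norm _
    have h4 : ‖(starRingEnd ℂ) l₂ * l₁‖ = ‖l₂‖ * ‖l₁‖ := by
      rw [norm_mul, RCLike.norm_conj]
    have h5 : ‖l₂‖ * ‖l₁‖ < 1 := by nlinarith
    have h6 : x = 1 - ((starRingEnd ℂ) l₂ * l₁).re := by
      rw [hx_def, hw_def]; simp
    nlinarith
  set D : ℝ := 1 - ‖p‖ ^ 2 with hD_def
  have hpn : ‖p‖ = ‖l₁‖ * ‖l₂‖ := by rw [hp, norm_mul]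
  have hD : 0 < D := by rw [hD_def, hpn]; nlinarith
  have hDuv : D = u + v - u * v := by
    rw [hD_def, hpn, hu_def, hv_def]; ring
  have hm2' : m ^ 2 = 2 * x - D := by
    rw [hm_def, nsq, hD_def, nsq, hp, hx_def, hw_def]
    simp [Complex.normSq_apply, Complex.mul_re, Complex.mul_im]
    ring
  -- β as a quotient
  set num : ℂ := s - (starRingEnd ℂ) s * p with hnum_def
  have hDC : ((D:ℝ):ℂ) = 1 - (‖p‖:ℂ) ^ 2 := by
    rw [hD_def]; push_cast; ring
  have hβ' : β = num / (D : ℂ) := by rw [hβ, hDC]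
  -- norm-squared of numerator
  have hnormnum : Complex.normSq num = D ^ 2 - u * v * m ^ 2 := by
    rw [hnum_def, hs, hp, hm_def, nsq, hDuv, hu_def, hv_def, hw_def, nsq, nsq]
    simp [Complex.normSq_apply, Complex.mul_re, Complex.mul_im,
      Complex.add_re, Complex.add_im]
    ring
  have hβnormsq : ‖β‖ ^ 2 = Complex.normSq num / D ^ 2 := by
    rw [hβ', norm_div, div_pow, nsq, Complex.norm_real, Real.norm_eq_abs,
      sq_abs]
  have hβnorm : 1 - ‖β‖ ^ 2 = (su * sv * m / D) ^ 2 := by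
    have h9 : (su * sv * m / D) ^ 2 = u * v * m ^ 2 / D ^ 2 := by
      rw [div_pow]; congr 1; rw [mul_pow, mul_pow, hsu2, hsv2]
    rw [hβnormsq, hnormnum, h9]
    field_simp
    ring
  set t : ℝ := Real.sqrt (1 - ‖β‖ ^ 2) with ht_def
  have ht : t = su * sv * m / D := by
    rw [ht_def, hβnorm, Real.sqrt_sq (div_nonneg (by positivity) hD.le)]
  set K : ℝ := 2 * (D + su * sv * m) with hK_def
  have hK : 0 < K := by rw [hK_def]; positivity
  have hKrel : 2 * (1 + t) * D = K := by
    rw [ht, hK_def]; field_simp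
  have h2t : (2 : ℂ) * (1 + (t:ℂ)) = (K:ℂ) / (D:ℂ) := by
    rw [eq_div_iff (by exact_mod_cast hD.ne')]
    exact_mod_cast congrArg (Complex.ofReal ·) hKrel
  set N : ℂ := (K:ℂ) - s * (starRingEnd ℂ) num with hN_def
  have hE : (1 : ℂ) - s * (starRingEnd ℂ) β / (2 * (1 + (t:ℂ))) = N / (K:ℂ) := by
    rw [hβ', h2t, hN_def, map_div₀, Complex.conj_ofReal]
    have hDne : ((D:ℝ):ℂ) ≠ 0 := by exact_mod_cast hD.ne'
    have hKne : ((K:ℝ):ℂ) ≠ 0 := by exact_mod_cast hK.ne'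
    field_simp
    try ring
  -- explicit form of N
  have hcu : ((u:ℝ):ℂ) = 1 - l₁ * (starRingEnd ℂ) l₁ := by
    rw [hu_def, nsq]; push_cast [Complex.mul_conj]; try ring
  have hcv : ((v:ℝ):ℂ) = 1 - l₂ * (starRingEnd ℂ) l₂ := by
    rw [hv_def, nsq]; push_cast [Complex.mul_conj]; try ring
  have hcD : ((D:ℝ):ℂ) = 1 - (l₁ * l₂) * ((starRingEnd ℂ) l₁ * (starRingEnd ℂ) l₂) := by
    rw [hD_def, hp, nsq]; push_cast [Complex.mul_conj]
    rw [← Complex.mul_conj, map_mul]; try ring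
  have hN : N = (u:ℂ) * w + (v:ℂ) * (starRingEnd ℂ) w + ((2 * su * sv * m : ℝ):ℂ) := by
    rw [hN_def, hK_def, hnum_def, hs, hp, hw_def]
    push_cast
    simp only [map_add, map_sub, map_mul, map_one, Complex.conj_conj]
    rw [show ((D:ℝ):ℂ) = 1 - (l₁ * l₂) * ((starRingEnd ℂ) l₁ * (starRingEnd ℂ) l₂) from hcD,
      show ((u:ℝ):ℂ) = 1 - l₁ * (starRingEnd ℂ) l₁ from hcu,
      show ((v:ℝ):ℂ) = 1 - l₂ * (starRingEnd ℂ) l₂ from hcv]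
    ring
  have hnormSqN : Complex.normSq N = ((u + v) * m + 2 * su * sv * x) ^ 2 := by
    have hre : N.re = (u + v) * x + 2 * su * sv * m := by
      rw [hN]
      simp [Complex.add_re, Complex.mul_re, hx_def, hy_def]
      ring
    have him : N.im = (u - v) * y := by
      rw [hN]
      simp [Complex.add_im, Complex.mul_im, hx_def, hy_def]
      ring
    rw [Complex.normSq_apply, hre, him]
    linear_combination (4 * su ^ 2 * sv ^ 2 - (u + v) ^ 2) * hm2 +
      4 * y ^ 2 * sv ^ 2 * hsu2 + 4 * y ^ 2 * u * hsv2
  have hNnorm : ‖N‖ = (u + v) * m + 2 * su * sv * x := by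
    have h8 : 0 ≤ (u + v) * m + 2 * su * sv * x := by positivity
    rw [Complex.norm_def, hnormSqN, Real.sqrt_sq h8]
  rw [hE, norm_div, Complex.norm_real, Real.norm_eq_abs, abs_of_pos hK, hNnorm]
  rw [div_eq_iff hK.ne']
  linear_combination (-su * sv) * hm2' + (-sv ^ 2 * m) * hsu2 + (-u * m) * hsv2 +
    (-m) * hDuv + (-(m / 2 + su * sv / 2)) * hK_def
end

section
/- Define the pentablock 𝒫 = { (a₂₁, tr A, det A) : A a 2×2 complex matrix with operator norm < 1 }, where a₂₁ is the (2,1) entry. If λ₁, λ₂ ∈ ℂ with |λ₁| < 1, |λ₂| < 1, and a ∈ ℂ satisfies |a| < ½|1 - conj(λ₂)λ₁| + ½(1-|λ₁|²)^{1/2}(1-|λ₂|²)^{1/2}, then (a, λ₁+λ₂, λ₁λ₂) ∈ 𝒫. -/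
/-- The pentablock: the image of the open unit operator-norm ball of 2×2 complex
matrices under `A ↦ (A₂₁, tr A, det A)`. -/
def pentablock : Set (ℂ × ℂ × ℂ) :=
  {x | ∃ A : Matrix (Fin 2) (Fin 2) ℂ, opNorm A < 1 ∧ x = (A 1 0, A.trace, A.det)}

open scoped Matrix.Norms.L2Operator

namespace PentaAux

lemma opNorm_eq' (A : Matrix (Fin 2) (Fin 2) ℂ) : opNorm A = ‖A‖ := rfl

lemma matNormOne : ‖(1 : Matrix (Fin 2) (Fin 2) ℂ)‖ = 1 := by
  rw [Matrix.cstar_norm_def, _root_.map_one]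
  exact ContinuousLinearMap.norm_id

open Matrix in
lemma opNorm_conj (V A : Matrix (Fin 2) (Fin 2) ℂ) (hV : Vᴴ * V = 1) :
    opNorm (V * A * Vᴴ) ≤ opNorm A := by
  have hVn : ‖V‖ = 1 := by
    have h2 : ‖Vᴴ * V‖ = ‖V‖ * ‖V‖ := Matrix.l2_opNorm_conjTranspose_mul_self V
    rw [hV, matNormOne] at h2
    nlinarith [norm_nonneg V]
  have hVHn : ‖Vᴴ‖ = 1 := by rw [Matrix.l2_opNorm_conjTranspose, hVn]
  rw [opNorm_eq', opNorm_eq']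
  calc ‖V * A * Vᴴ‖ ≤ ‖V * A‖ * ‖Vᴴ‖ := Matrix.l2_opNorm_mul _ _
    _ ≤ ‖V‖ * ‖A‖ * ‖Vᴴ‖ :=
        mul_le_mul_of_nonneg_right (Matrix.l2_opNorm_mul _ _) (norm_nonneg _)
    _ = ‖A‖ := by rw [hVn, hVHn]; ring

lemma opNorm_le_of_bound (A : Matrix (Fin 2) (Fin 2) ℂ) (k : ℝ) (hk : 0 ≤ k)
    (h : ∀ x₀ x₁ : ℂ, ‖A 0 0 * x₀ + A 0 1 * x₁‖^2 + ‖A 1 0 * x₀ + A 1 1 * x₁‖^2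
        ≤ k^2 * (‖x₀‖^2 + ‖x₁‖^2)) : opNorm A ≤ k := by
  refine ContinuousLinearMap.opNorm_le_bound _ hk fun x => ?_
  have hx : ∀ i, (Matrix.toEuclideanCLM (𝕜 := ℂ) A x) i = A.mulVec x i := fun i => rfl
  rw [EuclideanSpace.norm_eq, EuclideanSpace.norm_eq]
  simp only [hx, Fin.sum_univ_two, Matrix.mulVec, dotProduct]
  rw [show (k * Real.sqrt (‖x 0‖^2 + ‖x 1‖^2)) = Real.sqrt (k^2 * (‖x 0‖^2 + ‖x 1‖^2)) by
    rw [Real.sqrt_mul (by positivity), Real.sqrt_sq hk]]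
  exact Real.sqrt_le_sqrt (by simpa [Fin.sum_univ_two] using h (x 0) (x 1))

lemma key_ineq (k r₁ r₂ β p q : ℝ) (hk0 : 0 ≤ k) (hk1 : k ≤ 1)
    (h1 : r₁^2 ≤ k^2) (h2 : r₂^2 ≤ k^2)
    (hβ : β^2 ≤ (k^2-r₁^2)*(k^2-r₂^2)) (hp : 0 ≤ p) (hq : 0 ≤ q) :
    (r₁*p + β*q)^2 + r₂^2*q^2 ≤ k^2*(p^2+q^2) := by
  rcases eq_or_lt_of_le h1 with h | h
  · have : β = 0 := by nlinarith [sq_nonneg β]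
    subst this; nlinarith
  · have hk2 : k^2 ≤ 1 := by nlinarith
    have h3 : β^2*k^2 ≤ (k^2-r₁^2)*(k^2-r₂^2) := by nlinarith [sq_nonneg β]
    nlinarith [sq_nonneg ((k^2-r₁^2)*p - r₁*β*q),
      mul_nonneg (sub_nonneg.2 h3) (sq_nonneg q), sub_pos.2 h]

lemma opNorm_triangular (l₁ l₂ b : ℂ) (k : ℝ) (hk0 : 0 ≤ k) (hk1 : k ≤ 1)
    (h1 : ‖l₁‖^2 ≤ k^2) (h2 : ‖l₂‖^2 ≤ k^2)
    (hb : ‖b‖^2 ≤ (k^2-‖l₁‖^2)*(k^2-‖l₂‖^2)) :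
    opNorm !![l₁, b; 0, l₂] ≤ k := by
  refine opNorm_le_of_bound _ k hk0 fun x₀ x₁ => ?_
  show ‖l₁ * x₀ + b * x₁‖^2 + ‖0 * x₀ + l₂ * x₁‖^2 ≤ _
  rw [zero_mul, zero_add]
  have e1 : ‖l₁ * x₀ + b * x₁‖ ≤ ‖l₁‖*‖x₀‖ + ‖b‖*‖x₁‖ := by
    calc ‖l₁ * x₀ + b * x₁‖ ≤ ‖l₁ * x₀‖ + ‖b * x₁‖ := norm_add_le _ _
      _ = ‖l₁‖*‖x₀‖ + ‖b‖*‖x₁‖ := by rw [norm_mul, norm_mul]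
  have e2 : ‖l₁ * x₀ + b * x₁‖^2 ≤ (‖l₁‖*‖x₀‖ + ‖b‖*‖x₁‖)^2 := by
    apply sq_le_sq' _ e1
    nlinarith [norm_nonneg (l₁ * x₀ + b * x₁), norm_nonneg l₁, norm_nonneg b,
      norm_nonneg x₀, norm_nonneg x₁, mul_nonneg (norm_nonneg l₁) (norm_nonneg x₀),
      mul_nonneg (norm_nonneg b) (norm_nonneg x₁)]
  have e3 := key_ineq k ‖l₁‖ ‖l₂‖ ‖b‖ ‖x₀‖ ‖x₁‖ hk0 hk1 h1 h2 hb (norm_nonneg _) (norm_nonneg _)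
  calc ‖l₁ * x₀ + b * x₁‖^2 + ‖l₂ * x₁‖^2 ≤ (‖l₁‖*‖x₀‖ + ‖b‖*‖x₁‖)^2 + ‖l₂‖^2*‖x₁‖^2 := by
        rw [norm_mul, mul_pow]; linarith
    _ ≤ k^2 * (‖x₀‖^2 + ‖x₁‖^2) := e3

lemma exists_phase (z : ℂ) : ∃ p : ℂ, ‖p‖ = 1 ∧ z = p * ‖z‖ := by
  rcases eq_or_ne z 0 with h | h
  · exact ⟨1, by simp [h]⟩
  · refine ⟨z / ‖z‖, by simp [norm_div, h], ?_⟩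
    rw [div_mul_eq_mul_div, mul_div_assoc, div_self (by simpa using h), mul_one]

lemma exists_rot (z a : ℂ) (h : ‖z‖ = ‖a‖) : ∃ e : ℂ, ‖e‖ = 1 ∧ e * z = a := by
  rcases eq_or_ne z 0 with rfl | hz
  · refine ⟨1, by simp, ?_⟩
    rw [norm_zero] at h
    rw [mul_zero]
    exact (norm_eq_zero.1 h.symm).symm
  · refine ⟨a/z, ?_, div_mul_cancel₀ a hz⟩
    rw [norm_div, ← h, div_self (norm_ne_zero_iff.2 hz)]

lemma norm_id_sq (l₁ l₂ : ℂ) :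
    ‖1 - (starRingEnd ℂ) l₂ * l₁‖^2 = ‖l₁ - l₂‖^2 + (1-‖l₁‖^2)*(1-‖l₂‖^2) := by
  simp only [Complex.sq_norm, Complex.normSq_apply, Complex.sub_re,
    Complex.sub_im, Complex.one_re, Complex.one_im, Complex.mul_re, Complex.mul_im,
    Complex.conj_re, Complex.conj_im]
  ring

lemma eps_bound (u₁ u₂ bb ε : ℝ) (hu₁1 : u₁ ≤ 1) (hu₂1 : u₂ ≤ 1)
    (hε0 : 0 < ε) (hε1 : 2*ε ≤ u₁*u₂ - bb) :
    bb ≤ ((1-ε)-(1-u₁))*((1-ε)-(1-u₂)) := by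
  nlinarith [mul_nonneg hε0.le (show (0:ℝ) ≤ 2 - u₁ - u₂ + ε by linarith)]

set_option maxHeartbeats 1000000 in
lemma exists_params (l₁ l₂ a : ℂ) (h1 : ‖l₁‖ < 1) (h2 : ‖l₂‖ < 1)
    (ha : ‖a‖ < ‖1 - (starRingEnd ℂ) l₂ * l₁‖ / 2
        + Real.sqrt (1 - ‖l₁‖ ^ 2) * Real.sqrt (1 - ‖l₂‖ ^ 2) / 2) :
    ∃ (c s : ℝ) (b : ℂ), 0 ≤ c ∧ 0 ≤ s ∧ c^2 + s^2 = 1 ∧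
      ‖b‖ < Real.sqrt (1 - ‖l₁‖ ^ 2) * Real.sqrt (1 - ‖l₂‖ ^ 2) ∧
      ‖(c:ℂ)*(s:ℂ)*(l₁-l₂) - b*(s:ℂ)^2‖ = ‖a‖ := by
  set β := Real.sqrt (1 - ‖l₁‖ ^ 2) * Real.sqrt (1 - ‖l₂‖ ^ 2) with hβ
  set M := ‖a‖ with hM
  set N := ‖1 - (starRingEnd ℂ) l₂ * l₁‖ with hN
  set D := ‖l₁ - l₂‖ with hD
  have hr1 : 0 < 1 - ‖l₁‖^2 := by nlinarith [norm_nonneg l₁]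
  have hr2 : 0 < 1 - ‖l₂‖^2 := by nlinarith [norm_nonneg l₂]
  have hβpos : 0 < β := mul_pos (Real.sqrt_pos.2 hr1) (Real.sqrt_pos.2 hr2)
  have hβsq : β^2 = (1-‖l₁‖^2)*(1-‖l₂‖^2) := by
    rw [hβ, mul_pow, Real.sq_sqrt hr1.le, Real.sq_sqrt hr2.le]
  have hNsq : N^2 = D^2 + β^2 := by rw [hβsq, hN, hD, norm_id_sq]
  have hD0 : 0 ≤ D := norm_nonneg _
  have hN0 : 0 ≤ N := norm_nonneg _
  have hM0' : 0 ≤ M := norm_nonneg a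
  clear_value β M N D
  rcases eq_or_lt_of_le hM0' with hM0 | hMpos
  · refine ⟨1, 0, 0, zero_le_one, le_refl 0, by norm_num, by simpa using hβpos, ?_⟩
    have hz : ((1:ℝ):ℂ)*((0:ℝ):ℂ)*(l₁-l₂) - 0*((0:ℝ):ℂ)^2 = 0 := by push_cast; ring
    rw [hz, norm_zero, ← hM0]
  set δ := (N/2 + β/2) - M with hδ
  have hδpos : 0 < δ := by rw [hδ]; linarith [ha]
  set x := max 0 (β - δ) with hx
  have hx0 : 0 ≤ x := by rw [hx]; exact le_max_left _ _
  have hxβ : x < β := by rw [hx]; exact max_lt hβpos (by linarith)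
  clear_value δ x
  set h := Real.sqrt (D^2 + x^2) with hh
  have hhsq : h^2 = D^2 + x^2 := Real.sq_sqrt (by positivity)
  have hh0 : 0 ≤ h := Real.sqrt_nonneg _
  have hhx : x ≤ h := by
    have h2 := Real.sqrt_le_sqrt (show x^2 ≤ D^2+x^2 by linarith [sq_nonneg D])
    rwa [Real.sqrt_sq hx0, ← hh] at h2
  clear_value h
  have hsub : β - x ≤ δ := by
    have := le_max_right 0 (β - δ); rw [← hx] at this; linarith
  have hNle : N ≤ h + (β - x) := by
    have h1' : N = Real.sqrt (N^2) := (Real.sqrt_sq hN0).symm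
    rw [h1']
    have e1 : 0 ≤ β - x := by linarith
    have e2 : 2*x*(β-x) ≤ 2*h*(β-x) := mul_le_mul_of_nonneg_right (by linarith) e1
    have e3 : (h+(β-x))^2 = D^2+x^2 + 2*h*(β-x) + (β-x)^2 := by rw [← hhsq]; ring
    have e4 : β^2 = x^2 + 2*x*(β-x) + (β-x)^2 := by ring
    have hsq2 : N^2 ≤ (h + (β - x))^2 := by rw [hNsq]; linarith
    calc Real.sqrt (N^2) ≤ Real.sqrt ((h + (β-x))^2) := Real.sqrt_le_sqrt hsq2
      _ = h + (β - x) := Real.sqrt_sq (by linarith)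
  have hkey : M ≤ (h + x)/2 := by linarith
  have hhpos : 0 < h := by linarith
  set s₁ := Real.sqrt ((h+x)/(2*h)) with hs₁
  clear_value s₁
  have hfrac0 : 0 ≤ (h+x)/(2*h) := div_nonneg (by linarith) (by linarith)
  have hs₁sq : s₁^2 = (h+x)/(2*h) := by rw [hs₁]; exact Real.sq_sqrt hfrac0
  have hs₁0 : 0 ≤ s₁ := by rw [hs₁]; exact Real.sqrt_nonneg _
  have hs₁le1 : s₁ ≤ 1 := by
    rw [hs₁, show (1:ℝ) = Real.sqrt 1 by simp]
    exact Real.sqrt_le_sqrt (by rw [div_le_one (by linarith)]; linarith)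
  have hc₁ : 1 - s₁^2 = (h-x)/(2*h) := by rw [hs₁sq]; field_simp; ring
  have hsqrt1 : s₁ * Real.sqrt (1 - s₁^2) = D/(2*h) := by
    rw [hc₁, hs₁, ← Real.sqrt_mul hfrac0]
    rw [show (h+x)/(2*h) * ((h-x)/(2*h)) = (D/(2*h))^2 by
      field_simp; linear_combination hhsq]
    exact Real.sqrt_sq (div_nonneg hD0 (by linarith))
  set g : ℝ → ℝ := fun s => s * Real.sqrt (1-s^2) * D + x * s^2 with hg
  have hg_cont : ContinuousOn g (Set.Icc 0 s₁) := by
    apply Continuous.continuousOn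
    exact ((continuous_id.mul (Real.continuous_sqrt.comp
      (continuous_const.sub (continuous_pow 2)))).mul continuous_const).add
      (continuous_const.mul (continuous_pow 2))
  have hgs₁ : g s₁ = (h+x)/2 := by
    rw [hg]; simp only
    rw [hsqrt1, hs₁sq]
    field_simp
    linarith [hhsq]
  have hM_mem : M ∈ Set.Icc (g 0) (g s₁) := by
    constructor
    · rw [hg]; simp only; simp; linarith
    · rw [hgs₁]; exact hkey
  obtain ⟨s, hs_mem, hgs⟩ := intermediate_value_Icc hs₁0 hg_cont hM_mem
  obtain ⟨hs0, hss₁⟩ := hs_mem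
  have hs1 : s ≤ 1 := le_trans hss₁ hs₁le1
  have hcnn : 0 ≤ 1 - s^2 := by
    have := pow_le_one₀ hs0 hs1 (n := 2)
    linarith
  set c := Real.sqrt (1 - s^2) with hc
  have hc0 : 0 ≤ c := Real.sqrt_nonneg _
  have hcsq : c^2 = 1 - s^2 := Real.sq_sqrt hcnn
  have hgs' : s * c * D + x * s^2 = M := by rw [← hgs, hg, hc]
  clear_value c
  obtain ⟨p, hp1, hpd⟩ := exists_phase (l₁ - l₂)
  rw [← hD] at hpd
  refine ⟨c, s, -(x:ℂ)*p, hc0, hs0, by linarith, ?_, ?_⟩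
  · rw [norm_mul, norm_neg, hp1, mul_one, Complex.norm_real, Real.norm_eq_abs,
      abs_of_nonneg hx0]
    exact hxβ
  · have hval : (c:ℂ)*(s:ℂ)*(l₁-l₂) - (-(x:ℂ)*p)*(s:ℂ)^2 = p * ((c*s*D + x*s^2 : ℝ):ℂ) := by
      rw [hpd]
      push_cast
      ring
    rw [hval, norm_mul, hp1, one_mul, Complex.norm_real, Real.norm_eq_abs,
      abs_of_nonneg (add_nonneg (mul_nonneg (mul_nonneg hc0 hs0) hD0)
        (mul_nonneg hx0 (sq_nonneg s)))]
    linarith [hgs']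

end PentaAux

open PentaAux Matrix in
set_option maxHeartbeats 1000000 in
theorem stmt_6 (l₁ l₂ a : ℂ) (h1 : ‖l₁‖ < 1) (h2 : ‖l₂‖ < 1)
    (ha : ‖a‖ < ‖1 - (starRingEnd ℂ) l₂ * l₁‖ / 2
        + Real.sqrt (1 - ‖l₁‖ ^ 2) * Real.sqrt (1 - ‖l₂‖ ^ 2) / 2) :
    (a, l₁ + l₂, l₁ * l₂) ∈ pentablock := by
  obtain ⟨c, s, b, hc0, hs0, hcs, hbβ, hval⟩ := exists_params l₁ l₂ a h1 h2 ha
  obtain ⟨e, he1, hez⟩ := exists_rot _ a hval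
  -- norm parameters
  have hr1 : 0 < 1 - ‖l₁‖^2 := by nlinarith [norm_nonneg l₁]
  have hr2 : 0 < 1 - ‖l₂‖^2 := by nlinarith [norm_nonneg l₂]
  have hβsq : (Real.sqrt (1 - ‖l₁‖ ^ 2) * Real.sqrt (1 - ‖l₂‖ ^ 2))^2
      = (1-‖l₁‖^2)*(1-‖l₂‖^2) := by
    rw [mul_pow, Real.sq_sqrt hr1.le, Real.sq_sqrt hr2.le]
  have hbsq : ‖b‖^2 < (1-‖l₁‖^2)*(1-‖l₂‖^2) := by
    rw [← hβsq]
    exact pow_lt_pow_left₀ hbβ (norm_nonneg b) (by norm_num)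
  set ε := min (((1-‖l₁‖^2)*(1-‖l₂‖^2) - ‖b‖^2)/2) (min (1-‖l₁‖^2) (1-‖l₂‖^2)) with hε
  have hε0 : 0 < ε := lt_min (by linarith) (lt_min hr1 hr2)
  have hεu₁ : ε ≤ 1-‖l₁‖^2 := le_trans (min_le_right _ _) (min_le_left _ _)
  have hεu₂ : ε ≤ 1-‖l₂‖^2 := le_trans (min_le_right _ _) (min_le_right _ _)
  have hε2 : 2*ε ≤ (1-‖l₁‖^2)*(1-‖l₂‖^2) - ‖b‖^2 := by
    have := min_le_left (((1-‖l₁‖^2)*(1-‖l₂‖^2) - ‖b‖^2)/2) (min (1-‖l₁‖^2) (1-‖l₂‖^2))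
    rw [← hε] at this; linarith
  have hε1 : ε ≤ 1 := by nlinarith [norm_nonneg l₁, sq_nonneg ‖l₁‖]
  set k := Real.sqrt (1 - ε) with hk
  have hksq : k^2 = 1 - ε := Real.sq_sqrt (by linarith)
  have hk0 : 0 ≤ k := Real.sqrt_nonneg _
  have hk1 : k < 1 := by nlinarith [sq_nonneg (k-1), hksq, hε0, hk0]
  -- the triangular matrix
  set T : Matrix (Fin 2) (Fin 2) ℂ := !![l₁, b; 0, l₂] with hT
  have hTnorm : opNorm T ≤ k := by
    apply opNorm_triangular _ _ _ _ hk0 hk1.le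
    · rw [hksq]; linarith
    · rw [hksq]; linarith
    · rw [hksq]
      have := eps_bound (1-‖l₁‖^2) (1-‖l₂‖^2) (‖b‖^2) ε
        (by nlinarith [sq_nonneg ‖l₁‖]) (by nlinarith [sq_nonneg ‖l₂‖]) hε0 hε2
      calc ‖b‖^2 ≤ ((1-ε)-(1-(1-‖l₁‖^2)))*((1-ε)-(1-(1-‖l₂‖^2))) := this
        _ = (1-ε-‖l₁‖^2)*(1-ε-‖l₂‖^2) := by ring_nf
  -- the unitary
  have hee : (starRingEnd ℂ) e * e = 1 := by
    rw [← Complex.normSq_eq_conj_mul_self]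
    norm_cast
    rw [← Complex.sq_norm, he1, one_pow]
  set V : Matrix (Fin 2) (Fin 2) ℂ := !![(c:ℂ), -(s:ℂ); e*s, e*c] with hV
  have hcsC : (c:ℂ)^2 + (s:ℂ)^2 = 1 := by exact_mod_cast congrArg (Complex.ofReal) hcs
  have hVu : Vᴴ * V = 1 := by
    ext i j
    fin_cases i <;> fin_cases j <;>
      simp [hV, Matrix.mul_apply, Fin.sum_univ_two, Matrix.conjTranspose_apply, Matrix.one_apply,
        Complex.conj_ofReal, _root_.map_mul, map_neg] <;> ring_nf
    · linear_combination (s:ℂ)^2*hee + hcsC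
    · linear_combination (c*s:ℂ)*hee
    · linear_combination (s*c:ℂ)*hee
    · linear_combination (c:ℂ)^2*hee + hcsC
  refine ⟨V * T * Vᴴ, lt_of_le_of_lt (le_trans (opNorm_conj V T hVu) hTnorm) hk1, ?_⟩
  have hA10 : (V * T * Vᴴ) 1 0 = e * ((c:ℂ)*s*(l₁-l₂) - b*(s:ℂ)^2) := by
    simp [hV, hT, Matrix.mul_apply, Fin.sum_univ_two, Matrix.conjTranspose_apply,
      Complex.conj_ofReal, _root_.map_mul, map_neg]
    ring
  have htr : (V * T * Vᴴ).trace = l₁ + l₂ := by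
    rw [Matrix.trace_mul_cycle, hVu, Matrix.one_mul]
    simp [hT, Matrix.trace_fin_two]
  have hdet : (V * T * Vᴴ).det = l₁ * l₂ := by
    have hdv : Vᴴ.det * V.det = 1 := by rw [← Matrix.det_mul, hVu, Matrix.det_one]
    rw [Matrix.det_mul, Matrix.det_mul]
    have hdT : T.det = l₁ * l₂ := by simp [hT, Matrix.det_fin_two]
    rw [hdT]
    linear_combination l₁*l₂*hdv
  rw [hA10, htr, hdet, hez]
end

section
/- Let λ₁, λ₂ ∈ ℂ with |λ₁| ≤ 1, |λ₂| ≤ 1 and a ∈ ℂ with |a| ≤ ½|1 - conj(λ₂)λ₁| + ½(1-|λ₁|²)^{1/2}(1-|λ₂|²)^{1/2}. Then (a, λ₁+λ₂, λ₁λ₂) lies in the closure of the pentablock 𝒫. -/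
open Complex Matrix

lemma quad (α β : ℝ) (γ x y : ℂ) (hprod : normSq γ ≤ α * β) (hsum : 0 ≤ α + β) :
    2 * (γ * x * (starRingEnd ℂ) y).re ≤ α * normSq x + β * normSq y := by
  have hγ := normSq_nonneg γ
  have hα : 0 ≤ α := by nlinarith [sq_nonneg α, sq_nonneg β, sq_nonneg (α+β), sq_nonneg (α-β)]
  have hβ : 0 ≤ β := by nlinarith [sq_nonneg α, sq_nonneg β, sq_nonneg (α+β), sq_nonneg (α-β)]
  have h1 : (γ * x * (starRingEnd ℂ) y).re ≤ ‖γ‖ * (‖x‖ * ‖y‖) := by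
    calc (γ * x * (starRingEnd ℂ) y).re ≤ ‖γ * x * (starRingEnd ℂ) y‖ := Complex.re_le_norm _
    _ = ‖γ‖ * (‖x‖ * ‖y‖) := by simp [_root_.map_mul, mul_assoc]
  have h2 : ‖γ‖ ≤ Real.sqrt α * Real.sqrt β := by
    rw [← Real.sqrt_mul hα]
    rw [Complex.norm_def]
    exact Real.sqrt_le_sqrt hprod
  have hsq : ∀ z : ℂ, ‖z‖ ^ 2 = normSq z := fun z => Complex.sq_norm z
  have hax := norm_nonneg x
  have hay := norm_nonneg y
  have hag := norm_nonneg γ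
  have e1 : Real.sqrt α ^ 2 = α := Real.sq_sqrt hα
  have e2 : Real.sqrt β ^ 2 = β := Real.sq_sqrt hβ
  nlinarith [sq_nonneg (Real.sqrt α * ‖x‖ - Real.sqrt β * ‖y‖),
    mul_nonneg (mul_nonneg hax hay) (sub_nonneg.2 h2), hsq x, hsq y,
    Real.sqrt_nonneg α, Real.sqrt_nonneg β]

lemma contract (A : Matrix (Fin 2) (Fin 2) ℂ)
    (hdet : normSq A.det ≤ 1)
    (hF : normSq (A 0 0) + normSq (A 0 1) + normSq (A 1 0) + normSq (A 1 1)
        ≤ 1 + normSq A.det) :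
    opNorm A ≤ 1 := by
  refine ContinuousLinearMap.opNorm_le_bound _ zero_le_one fun x => ?_
  rw [one_mul]
  rw [← Real.sqrt_sq (norm_nonneg ((Matrix.toEuclideanCLM (𝕜 := ℂ) A) x)),
      ← Real.sqrt_sq (norm_nonneg x)]
  apply Real.sqrt_le_sqrt
  have h := Matrix.ofLp_toEuclideanCLM (𝕜 := ℂ) A x
  have h0 := congrFun h 0
  have h1 := congrFun h 1
  rw [EuclideanSpace.norm_eq, Real.sq_sqrt (by positivity),
      EuclideanSpace.norm_eq, Real.sq_sqrt (by positivity)]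
  simp only [Fin.sum_univ_two, Complex.sq_norm, h0, h1, Matrix.mulVec,
    dotProduct, Fin.sum_univ_two]
  set x0 := x 0; set x1 := x 1
  set γ : ℂ := A 0 0 * (starRingEnd ℂ) (A 0 1) + A 1 0 * (starRingEnd ℂ) (A 1 1) with hγdef
  have lagrange : normSq γ + normSq A.det
      = (normSq (A 0 0) + normSq (A 1 0)) * (normSq (A 0 1) + normSq (A 1 1)) := by
    simp only [hγdef, Matrix.det_fin_two, Complex.normSq_apply, Complex.add_re, Complex.add_im,
      Complex.mul_re, Complex.mul_im, Complex.sub_re, Complex.sub_im, Complex.conj_re,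
      Complex.conj_im]
    ring
  have key := quad (1 - (normSq (A 0 0) + normSq (A 1 0))) (1 - (normSq (A 0 1) + normSq (A 1 1)))
      γ x0 x1 (by nlinarith) (by linarith)
  have expand : ∀ u v w z : ℂ, normSq (u + v) = normSq u + normSq v + 2 * (u * (starRingEnd ℂ) v).re := by
    intro u v w z; exact Complex.normSq_add u v
  have cross : (A 0 0 * x0 * (starRingEnd ℂ) (A 0 1 * x1)).re
      + (A 1 0 * x0 * (starRingEnd ℂ) (A 1 1 * x1)).re = (γ * x0 * (starRingEnd ℂ) x1).re := by
    rw [← Complex.add_re]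
    congr 1
    simp only [hγdef, _root_.map_mul]
    ring
  rw [expand _ _ 0 0, expand _ _ 0 0]
  have e0 : normSq (A 0 0 * x0) = normSq (A 0 0) * normSq x0 := by simp [normSq_mul]
  have e1 : normSq (A 0 1 * x1) = normSq (A 0 1) * normSq x1 := by simp [normSq_mul]
  have e2 : normSq (A 1 0 * x0) = normSq (A 1 0) * normSq x0 := by simp [normSq_mul]
  have e3 : normSq (A 1 1 * x1) = normSq (A 1 1) * normSq x1 := by simp [normSq_mul]
  rw [e0, e1, e2, e3]
  nlinarith [cross, key]

lemma fsum (M : Matrix (Fin 2) (Fin 2) ℂ) :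
    (M * Mᴴ).trace = ((normSq (M 0 0) + normSq (M 0 1) + normSq (M 1 0) + normSq (M 1 1) : ℝ) : ℂ) := by
  simp [Matrix.trace_fin_two, Matrix.mul_apply, Matrix.conjTranspose_apply, Fin.sum_univ_two,
    Complex.mul_conj]
  ring

lemma build (l₁ l₂ t v : ℂ) (c s : ℝ) (hcs : c^2 + s^2 = 1) (hv : normSq v = 1)
    (h1 : normSq l₁ ≤ 1) (h2 : normSq l₂ ≤ 1)
    (ht : normSq t ≤ (1 - normSq l₁) * (1 - normSq l₂)) :
    ∃ A : Matrix (Fin 2) (Fin 2) ℂ, opNorm A ≤ 1 ∧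
      A 1 0 = v * ((c : ℂ) * (s : ℂ) * (l₁ - l₂) - (s : ℂ)^2 * t) ∧
      A.trace = l₁ + l₂ ∧ A.det = l₁ * l₂ := by
  have hvc : v * (starRingEnd ℂ) v = 1 := by
    rw [Complex.mul_conj, hv]; norm_num
  have hcsC : (c : ℂ)^2 + (s : ℂ)^2 = 1 := by exact_mod_cast hcs
  set U : Matrix (Fin 2) (Fin 2) ℂ := !![(c : ℂ), -(s : ℂ); v * s, v * c] with hUdef
  set T : Matrix (Fin 2) (Fin 2) ℂ := !![l₁, t; 0, l₂] with hTdef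
  have hUU : U * Uᴴ = 1 := by
    ext i j
    fin_cases i <;> fin_cases j <;>
      simp [hUdef, Matrix.mul_apply, Matrix.conjTranspose_apply, Fin.sum_univ_two,
        Complex.conj_ofReal, _root_.map_mul, Complex.star_def]
    · linear_combination hcsC
    · ring
    · ring
    · linear_combination hvc + (v*(starRingEnd ℂ) v) * hcsC
  have hU'U : Uᴴ * U = 1 := mul_eq_one_comm.mp hUU
  refine ⟨U * T * Uᴴ, ?_, ?_, ?_, ?_⟩
  · -- contraction
    have hdet : (U * T * Uᴴ).det = l₁ * l₂ := by
      have : (U * T * Uᴴ).det = U.det * T.det * Uᴴ.det := by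
        rw [Matrix.det_mul, Matrix.det_mul]
      rw [this]
      have : U.det * Uᴴ.det = 1 := by
        rw [mul_comm, ← Matrix.det_mul, hU'U, Matrix.det_one]
      calc U.det * T.det * Uᴴ.det = T.det * (U.det * Uᴴ.det) := by ring
        _ = T.det := by rw [this, mul_one]
        _ = l₁ * l₂ := by simp [hTdef, Matrix.det_fin_two_of]
    apply contract
    · rw [hdet, Complex.normSq_mul]
      exact mul_le_one₀ h1 (normSq_nonneg _) h2
    · have hAA : (U * T * Uᴴ) * (U * T * Uᴴ)ᴴ = U * (T * Tᴴ) * Uᴴ := by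
        rw [Matrix.conjTranspose_mul, Matrix.conjTranspose_mul, Matrix.conjTranspose_conjTranspose]
        calc U * T * Uᴴ * (U * (Tᴴ * Uᴴ)) = U * T * (Uᴴ * U) * (Tᴴ * Uᴴ) := by noncomm_ring
          _ = U * (T * Tᴴ) * Uᴴ := by rw [hU'U]; noncomm_ring
      have htr : ((U * T * Uᴴ) * (U * T * Uᴴ)ᴴ).trace = (T * Tᴴ).trace := by
        rw [hAA, Matrix.trace_mul_comm (U * (T * Tᴴ)) Uᴴ, ← Matrix.mul_assoc,
          Matrix.trace_mul_comm]
        rw [Matrix.mul_assoc T Tᴴ, hU'U, Matrix.mul_one]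
      rw [fsum (U * T * Uᴴ), fsum T] at htr
      have hre : normSq ((U*T*Uᴴ) 0 0) + normSq ((U*T*Uᴴ) 0 1) + normSq ((U*T*Uᴴ) 1 0) + normSq ((U*T*Uᴴ) 1 1)
          = normSq (T 0 0) + normSq (T 0 1) + normSq (T 1 0) + normSq (T 1 1) := by
        exact_mod_cast htr
      rw [hre, hdet, Complex.normSq_mul]
      have : normSq (T 0 0) = normSq l₁ := by simp [hTdef]
      have h01 : normSq (T 0 1) = normSq t := by simp [hTdef]
      have h10 : normSq (T 1 0) = 0 := by simp [hTdef]
      have h11 : normSq (T 1 1) = normSq l₂ := by simp [hTdef]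
      rw [this, h01, h10, h11]
      nlinarith [normSq_nonneg t]
  · -- entry 1 0
    simp [hUdef, hTdef, Matrix.mul_apply, Matrix.conjTranspose_apply, Fin.sum_univ_two,
      Complex.conj_ofReal, _root_.map_mul]
    ring
  · -- trace
    rw [Matrix.trace_mul_comm (U * T) Uᴴ, ← Matrix.mul_assoc, hU'U, Matrix.one_mul]
    simp [hTdef, Matrix.trace_fin_two]
  · -- det
    rw [Matrix.det_mul, Matrix.det_mul]
    have hdu : U.det * Uᴴ.det = 1 := by
      rw [mul_comm, ← Matrix.det_mul, hU'U, Matrix.det_one]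
    calc U.det * T.det * Uᴴ.det = T.det * (U.det * Uᴴ.det) := by ring
      _ = T.det := by rw [hdu, mul_one]
      _ = l₁ * l₂ := by simp [hTdef, Matrix.det_fin_two_of]

open Real in
set_option maxHeartbeats 1000000 in
set_option synthInstance.maxHeartbeats 400000 in
theorem stmt_7 (l₁ l₂ a : ℂ) (h1 : ‖l₁‖ ≤ 1) (h2 : ‖l₂‖ ≤ 1)
    (ha : ‖a‖ ≤ ‖1 - (starRingEnd ℂ) l₂ * l₁‖ / 2
        + Real.sqrt (1 - ‖l₁‖ ^ 2) * Real.sqrt (1 - ‖l₂‖ ^ 2) / 2) :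
    (a, l₁ + l₂, l₁ * l₂) ∈ closure pentablock := by
  have hn1 : normSq l₁ ≤ 1 := by
    rw [← Complex.sq_norm]; nlinarith [norm_nonneg l₁]
  have hn2 : normSq l₂ ≤ 1 := by
    rw [← Complex.sq_norm]; nlinarith [norm_nonneg l₂]
  set D : ℂ := l₁ - l₂ with hD
  set R : ℝ := ‖1 - (starRingEnd ℂ) l₂ * l₁‖ with hRdef
  set τ : ℝ := Real.sqrt (1 - ‖l₁‖ ^ 2) * Real.sqrt (1 - ‖l₂‖ ^ 2) with hτdef
  have hτnn : 0 ≤ τ := mul_nonneg (Real.sqrt_nonneg _) (Real.sqrt_nonneg _)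
  have hRnn : 0 ≤ R := norm_nonneg _
  have hτsq : τ ^ 2 = (1 - normSq l₁) * (1 - normSq l₂) := by
    rw [hτdef, mul_pow, Real.sq_sqrt (by nlinarith [norm_nonneg l₁]),
      Real.sq_sqrt (by nlinarith [norm_nonneg l₂])]
    simp [Complex.sq_norm]
  have hR2 : R ^ 2 = ‖D‖ ^ 2 + τ ^ 2 := by
    rw [hRdef, hτsq, Complex.sq_norm, Complex.sq_norm]
    simp only [hD, Complex.normSq_apply, Complex.sub_re, Complex.sub_im, Complex.mul_re,
      Complex.mul_im, Complex.one_re, Complex.one_im, Complex.conj_re, Complex.conj_im]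
    ring
  have hτR : τ ≤ R := by nlinarith [norm_nonneg D]
  -- the function g and IVT
  have hgcont : Continuous (fun θ : ℝ => Real.cos θ * Real.sin θ * ‖D‖
      + Real.sin θ ^ 2 * τ) := by fun_prop
  set θm : ℝ := Real.arccos (-(τ / R)) / 2 with hθm
  have hθm0 : 0 ≤ θm := div_nonneg (Real.arccos_nonneg _) (by norm_num)
  have hθmπ : θm ≤ π / 2 := by
    rw [hθm]; have := Real.arccos_le_pi (-(τ / R)); linarith
  have hgθm : ‖a‖ ≤ Real.cos θm * Real.sin θm * ‖D‖ + Real.sin θm ^ 2 * τ := by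
    rcases eq_or_lt_of_le hRnn with hR0 | hRpos
    · have hτ0 : τ = 0 := by nlinarith
      have haD : ‖D‖ = 0 := by nlinarith [norm_nonneg D]
      have h0 : ‖a‖ ≤ 0 := by rw [← hR0, hτ0] at ha; linarith
      have h0' : ‖a‖ = 0 := le_antisymm h0 (norm_nonneg a)
      rw [h0', haD, hτ0]; ring_nf; rfl
    · have hRne : R ≠ 0 := ne_of_gt hRpos
      have hratio1 : -(τ / R) ≤ 1 := by
        have : 0 ≤ τ / R := div_nonneg hτnn hRnn
        linarith
      have hratio2 : (-1 : ℝ) ≤ -(τ / R) := by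
        have : τ / R ≤ 1 := (div_le_one hRpos).2 hτR
        linarith
      have hcos2 : Real.cos (2 * θm) = -(τ / R) := by
        rw [hθm, mul_div_cancel₀ _ (two_ne_zero)]
        exact Real.cos_arccos hratio2 hratio1
      have hsin2 : Real.sin (2 * θm) = ‖D‖ / R := by
        rw [hθm, mul_div_cancel₀ _ (two_ne_zero), Real.sin_arccos]
        rw [show 1 - (-(τ / R)) ^ 2 = (‖D‖ / R) ^ 2 by
          rw [div_pow]
          field_simp
          linear_combination hR2]
        exact Real.sqrt_sq (div_nonneg (norm_nonneg D) hRnn)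
      have e1 : Real.cos θm * Real.sin θm = Real.sin (2 * θm) / 2 := by
        rw [Real.sin_two_mul]; ring
      have e2 : Real.sin θm ^ 2 = 1 / 2 - Real.cos (2 * θm) / 2 := Real.sin_sq_eq_half_sub θm
      rw [e1, e2, hsin2, hcos2]
      have : ‖D‖ / R / 2 * ‖D‖ + (1 / 2 - -(τ / R) / 2) * τ
          = R / 2 + τ / 2 := by
        field_simp
        linear_combination (-1 : ℝ) * hR2
      rw [this]
      linarith [ha]
  obtain ⟨θ, hθmem, hgθ⟩ := intermediate_value_Icc hθm0 hgcont.continuousOn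
    ⟨by simp [norm_nonneg a], hgθm⟩
  have hθ0 : 0 ≤ θ := hθmem.1
  have hθπ : θ ≤ π / 2 := le_trans hθmem.2 hθmπ
  set c : ℝ := Real.cos θ with hc
  set s : ℝ := Real.sin θ with hs
  have hcnn : 0 ≤ c := Real.cos_nonneg_of_mem_Icc ⟨by linarith [Real.pi_pos], hθπ⟩
  have hsnn : 0 ≤ s := Real.sin_nonneg_of_nonneg_of_le_pi hθ0 (by linarith [Real.pi_pos])
  have hcs : c ^ 2 + s ^ 2 = 1 := by
    rw [hc, hs, add_comm]; exact Real.sin_sq_add_cos_sq θ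
  have hgθ' : c * s * ‖D‖ + s ^ 2 * τ = ‖a‖ := hgθ
  -- direction ω
  have hωdef : ∃ ω : ℂ, normSq ω = 1 ∧ D = ((‖D‖ : ℝ) : ℂ) * ω := by
    by_cases hD0 : D = 0
    · exact ⟨1, by simp, by simp [hD0]⟩
    · have hDne : ‖D‖ ≠ 0 := norm_ne_zero_iff.mpr hD0
      refine ⟨D / ((‖D‖ : ℝ) : ℂ), ?_, ?_⟩
      · rw [normSq_div, Complex.normSq_ofReal, ← Complex.sq_norm D, sq]
        exact div_self (mul_ne_zero hDne hDne)
      · rw [mul_div_cancel₀]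
        exact_mod_cast hDne ∘ (by exact_mod_cast Complex.ofReal_eq_zero.mp)
  obtain ⟨ω, hωn, hDω⟩ := hωdef
  -- t
  set t : ℂ := -(τ : ℂ) * ω with ht
  have htn : normSq t ≤ (1 - normSq l₁) * (1 - normSq l₂) := by
    rw [ht, normSq_mul, normSq_neg, Complex.normSq_ofReal, hωn, mul_one, ← sq]
    rw [← hτsq]
  -- v
  have hvdef : ∃ v : ℂ, normSq v = 1 ∧ v * (((‖a‖ : ℝ) : ℂ) * ω) = a := by
    by_cases ha0 : a = 0
    · exact ⟨1, by simp, by simp [ha0]⟩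
    · have hane : (‖a‖ : ℝ) ≠ 0 := norm_ne_zero_iff.2 ha0
      have hωne : ω ≠ 0 := by
        intro h; rw [h] at hωn; simp at hωn
      refine ⟨a / (((‖a‖ : ℝ) : ℂ) * ω), ?_, ?_⟩
      · rw [normSq_div, normSq_mul, Complex.normSq_ofReal, hωn, mul_one]
        rw [← Complex.sq_norm a, sq]
        exact div_self (mul_ne_zero hane hane)
      · rw [div_mul_cancel₀]
        exact mul_ne_zero (by exact_mod_cast hane) hωne
  obtain ⟨v, hvn, hva⟩ := hvdef
  -- build the matrix
  obtain ⟨A, hAnorm, hA10, hAtr, hAdet⟩ := build l₁ l₂ t v c s hcs hvn hn1 hn2 htn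
  have hA10a : A 1 0 = a := by
    rw [hA10, ← hva]
    congr 1
    rw [← hD, hDω, ht]
    rw [show ((c:ℂ) * s * (((‖D‖ : ℝ):ℂ) * ω) - (s:ℂ)^2 * (-(τ:ℂ) * ω))
        = (((c * s * ‖D‖ + s ^ 2 * τ : ℝ) : ℂ)) * ω by push_cast; ring, hgθ']
  -- scaling into the open ball
  have hscale : ∀ r : ℝ, 0 < r → r < 1 →
      (((r : ℂ) * a, (r : ℂ) * (l₁ + l₂), (r : ℂ) ^ 2 * (l₁ * l₂)) ∈ pentablock) := by
    intro r hr0 hr1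
    refine ⟨(r : ℂ) • A, ?_, ?_⟩
    · have hmap : Matrix.toEuclideanCLM (𝕜 := ℂ) ((r : ℂ) • A)
          = (r : ℂ) • Matrix.toEuclideanCLM (𝕜 := ℂ) A := map_smul _ _ _
      unfold opNorm
      rw [hmap]
      have hub := norm_smul_le ((r : ℂ)) (Matrix.toEuclideanCLM (𝕜 := ℂ) A)
      have hrc : ‖(r : ℂ)‖ = r := by
        rw [Complex.norm_real, Real.norm_of_nonneg hr0.le]
      calc ‖(r : ℂ) • Matrix.toEuclideanCLM (𝕜 := ℂ) A‖
          ≤ ‖(r : ℂ)‖ * ‖Matrix.toEuclideanCLM (𝕜 := ℂ) A‖ := hub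
        _ ≤ r * 1 := by rw [hrc]; exact mul_le_mul_of_nonneg_left hAnorm hr0.le
        _ < 1 := by linarith
    · have e10 : ((r : ℂ) • A) 1 0 = (r : ℂ) * a := by
        simp [Matrix.smul_apply, hA10a, smul_eq_mul]
      have etr : ((r : ℂ) • A).trace = (r : ℂ) * (l₁ + l₂) := by
        rw [Matrix.trace_smul, hAtr, smul_eq_mul]
      have edet : ((r : ℂ) • A).det = (r : ℂ) ^ 2 * (l₁ * l₂) := by
        rw [Matrix.det_smul, hAdet]
        norm_num [smul_eq_mul]
      rw [e10, etr, edet]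
  -- pass to closure
  have htend : Filter.Tendsto
      (fun r : ℝ => (((r : ℂ) * a, (r : ℂ) * (l₁ + l₂), (r : ℂ) ^ 2 * (l₁ * l₂)) : ℂ × ℂ × ℂ))
      (nhdsWithin 1 (Set.Iio 1)) (nhds (a, l₁ + l₂, l₁ * l₂)) := by
    have hcont : Continuous
        (fun r : ℝ => (((r : ℂ) * a, (r : ℂ) * (l₁ + l₂), (r : ℂ) ^ 2 * (l₁ * l₂)) : ℂ × ℂ × ℂ)) := by
      fun_prop
    have := hcont.continuousAt (x := (1 : ℝ))
    have h1' := this.tendsto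
    simp only [Complex.ofReal_one, one_mul, one_pow] at h1'
    exact h1'.mono_left nhdsWithin_le_nhds
  refine mem_closure_of_tendsto htend ?_
  filter_upwards [Ioo_mem_nhdsLT_of_mem (by norm_num : (1:ℝ) ∈ Set.Ioc 0 1)] with r hr
  exact hscale r hr.1 hr.2
end

section
/- A matrix X = [[z, w],[0, z]] (z, w ∈ ℂ) has operator norm at most 1 if and only if |w| ≤ 1 - |z|². -/
private lemma scalar_rev {a b s t : ℝ} (ha : 0 ≤ a) (hb : 0 ≤ b) (hs : 0 ≤ s)
    (ht : 0 ≤ t) (h : b ≤ 1 - a^2) :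
    (a*s + b*t)^2 + a^2*t^2 ≤ s^2 + t^2 := by
  have hc : 0 ≤ 1 - a^2 - b := by linarith
  nlinarith [mul_nonneg (by nlinarith : (0:ℝ) ≤ 1 - a^2) (sq_nonneg (s - a*t)),
    mul_nonneg (mul_nonneg hc ht)
      (by nlinarith [mul_nonneg (mul_nonneg ha hs) ht] : (0:ℝ) ≤ 2*a*s + (1-a^2)*t + b*t)]

private lemma key (z w : ℂ) :
    (∀ x₁ x₂ : ℂ, ‖z*x₁ + w*x₂‖^2 + ‖z*x₂‖^2 ≤ ‖x₁‖^2 + ‖x₂‖^2) ↔ ‖w‖ ≤ 1 - ‖z‖^2 := by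
  have ha : 0 ≤ ‖z‖ := norm_nonneg z
  have hb : 0 ≤ ‖w‖ := norm_nonneg w
  constructor
  · intro h
    have h1 : ‖z‖^2 ≤ 1 := by
      have := h 1 0
      simp only [mul_one, mul_zero, add_zero, norm_one, norm_zero] at this
      nlinarith
    have h2 : ‖w‖^2 + ‖z‖^2 ≤ 1 := by
      have := h 0 1
      simp only [mul_one, mul_zero, zero_add, norm_one, norm_zero] at this
      nlinarith
    rcases eq_or_lt_of_le ha with haz | haz
    · nlinarith
    rcases eq_or_lt_of_le hb with hbz | hbz
    · nlinarith
    have hz : z * (starRingEnd ℂ) z = ((‖z‖^2 : ℝ) : ℂ) := by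
      rw [Complex.mul_conj]
      norm_cast
      rw [Complex.normSq_eq_norm_sq]
    have h3 := h ((‖z‖:ℂ) * ((starRingEnd ℂ) z * w)) ((‖z‖*‖w‖ : ℝ) : ℂ)
    have e1 : z * ((‖z‖:ℂ) * ((starRingEnd ℂ) z * w)) + w * ((‖z‖*‖w‖ : ℝ) : ℂ)
        = ((‖z‖^3 + ‖z‖*‖w‖ : ℝ) : ℂ) * w := by
      calc z * ((‖z‖:ℂ) * ((starRingEnd ℂ) z * w)) + w * ((‖z‖*‖w‖ : ℝ) : ℂ)
          = (‖z‖:ℂ) * (z * (starRingEnd ℂ) z) * w + ((‖z‖*‖w‖ : ℝ) : ℂ) * w := by ring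
        _ = ((‖z‖^3 + ‖z‖*‖w‖ : ℝ) : ℂ) * w := by rw [hz]; push_cast; ring
    rw [e1] at h3
    have n1 : ‖((‖z‖^3 + ‖z‖*‖w‖ : ℝ) : ℂ) * w‖ = (‖z‖^3 + ‖z‖*‖w‖) * ‖w‖ := by
      rw [norm_mul, Complex.norm_real, Real.norm_of_nonneg (by positivity)]
    have n2 : ‖(‖z‖:ℂ) * ((starRingEnd ℂ) z * w)‖ = ‖z‖ * (‖z‖ * ‖w‖) := by
      rw [norm_mul, norm_mul, RCLike.norm_conj, Complex.norm_real, Real.norm_of_nonneg ha]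
    have n3 : ‖z * ((‖z‖*‖w‖ : ℝ) : ℂ)‖ = ‖z‖ * (‖z‖ * ‖w‖) := by
      rw [norm_mul, Complex.norm_real, Real.norm_of_nonneg (by positivity)]
    rw [n1, n2, n3] at h3
    have n4 : ‖((‖z‖*‖w‖ : ℝ) : ℂ)‖ = ‖z‖ * ‖w‖ := by
      rw [Complex.norm_real, Real.norm_of_nonneg (by positivity)]
    rw [n4] at h3
    -- h3 : ((a^3+a*b)*b)^2 + (a*(a*b))^2 ≤ (a*(a*b))^2 + (a*b)^2
    nlinarith [mul_pos haz hbz, mul_pos (mul_pos haz hbz) (mul_pos haz hbz),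
      sq_nonneg (‖z‖^2 + ‖w‖ - 1), sq_nonneg (‖z‖^2 + ‖w‖ + 1)]
  · intro h x₁ x₂
    have tri : ‖z*x₁ + w*x₂‖ ≤ ‖z‖*‖x₁‖ + ‖w‖*‖x₂‖ := by
      calc ‖z*x₁ + w*x₂‖ ≤ ‖z*x₁‖ + ‖w*x₂‖ := norm_add_le _ _
      _ = ‖z‖*‖x₁‖ + ‖w‖*‖x₂‖ := by rw [norm_mul, norm_mul]
    have h2 : ‖z*x₂‖^2 = ‖z‖^2*‖x₂‖^2 := by rw [norm_mul]; ring
    have key := scalar_rev ha hb (norm_nonneg x₁) (norm_nonneg x₂) h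
    nlinarith [norm_nonneg (z*x₁+w*x₂), norm_nonneg x₁, norm_nonneg x₂,
      mul_nonneg (mul_nonneg ha (norm_nonneg x₁)) (mul_nonneg hb (norm_nonneg x₂))]

private lemma apply_eq (z w : ℂ) (u : Fin 2 → ℂ) :
    Matrix.toLin' !![z, w; 0, z] u = ![z * u 0 + w * u 1, z * u 1] := by
  funext i
  fin_cases i <;>
    simp [Matrix.toLin'_apply, Matrix.mulVec, dotProduct, Fin.sum_univ_two]

private lemma norm_pair (u : Fin 2 → ℂ) :
    ‖(WithLp.equiv 2 (Fin 2 → ℂ)).symm u‖^2 = ‖u 0‖^2 + ‖u 1‖^2 := by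
  rw [EuclideanSpace.norm_eq, Real.sq_sqrt (by positivity)]
  simp [Fin.sum_univ_two]

private lemma toEuclideanCLM_equiv_symm (A : Matrix (Fin 2) (Fin 2) ℂ) (x : Fin 2 → ℂ) :
    Matrix.toEuclideanCLM (𝕜 := ℂ) A ((WithLp.equiv 2 (Fin 2 → ℂ)).symm x) =
      (WithLp.equiv 2 (Fin 2 → ℂ)).symm (Matrix.toLin' A x) := rfl

theorem stmt_11 (z w : ℂ) :
    opNorm !![z, w; 0, z] ≤ 1 ↔ ‖w‖ ≤ 1 - ‖z‖ ^ 2 := by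
  rw [← key z w]
  unfold opNorm
  rw [ContinuousLinearMap.opNorm_le_iff zero_le_one]
  constructor
  · intro h x₁ x₂
    have H := h ((WithLp.equiv 2 (Fin 2 → ℂ)).symm ![x₁, x₂])
    rw [toEuclideanCLM_equiv_symm, apply_eq, one_mul] at H
    have H2 := pow_le_pow_left₀ (norm_nonneg _) H 2
    rw [norm_pair, norm_pair] at H2
    simpa using H2
  · intro h y
    rw [one_mul]
    have hy : y = (WithLp.equiv 2 (Fin 2 → ℂ)).symm (WithLp.equiv 2 (Fin 2 → ℂ) y) :=
      (Equiv.symm_apply_apply _ _).symm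
    rw [hy, toEuclideanCLM_equiv_symm, apply_eq]
    set u := WithLp.equiv 2 (Fin 2 → ℂ) y
    have := h (u 0) (u 1)
    rw [← Real.sqrt_sq (norm_nonneg ((WithLp.equiv 2 (Fin 2 → ℂ)).symm _)),
      ← Real.sqrt_sq (norm_nonneg ((WithLp.equiv 2 (Fin 2 → ℂ)).symm u))]
    apply Real.sqrt_le_sqrt
    rw [norm_pair, norm_pair]
    simpa using this
end

section
/- Neither the pentablock 𝒫 nor its closure is a convex subset of ℂ³; specifically, (0,2,1) and (0,2i,-1) lie in the closure of 𝒫 but their midpoint (0,1+i,0) does not. -/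
/-- An auxiliary sequence increasing to 1. -/
noncomputable def cseq (n : ℕ) : ℝ := 1 - (n + 1 : ℝ)⁻¹

open Polynomial in
lemma root_norm_le (A : Matrix (Fin 2) (Fin 2) ℂ) {μ : ℂ}
    (h : A.charpoly.IsRoot μ) : ‖μ‖ ≤ opNorm A := by
  have hmem : μ ∈ spectrum ℂ A := by
    rw [spectrum.mem_iff]
    intro hu
    rw [Matrix.isUnit_iff_isUnit_det, isUnit_iff_ne_zero] at hu
    apply hu
    have hdet : (algebraMap ℂ (Matrix (Fin 2) (Fin 2) ℂ) μ - A).det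
        = A.charpoly.eval μ := by
      rw [Matrix.charpoly, eval_det, Matrix.matPolyEquiv_charmatrix]
      simp [Matrix.scalar, Matrix.algebraMap_eq_diagonal]
    rw [hdet, h.eq_zero]
  rw [← AlgEquiv.spectrum_eq (Matrix.toEuclideanCLM (𝕜 := ℂ) (n := Fin 2)) A] at hmem
  exact spectrum.norm_le_norm_of_mem hmem

/-- The key bound: for a matrix of operator norm `< 1`, `|tr A| ≤ 1 + |det A|`. -/
lemma trace_bound (A : Matrix (Fin 2) (Fin 2) ℂ) (hA : opNorm A < 1) :
    ‖A.trace‖ ≤ 1 + ‖A.det‖ := by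
  have hsplit : A.charpoly.roots.card = 2 := by
    rw [Polynomial.splits_iff_card_roots.mp (IsAlgClosed.splits A.charpoly),
      Matrix.charpoly_natDegree_eq_dim]
    simp
  obtain ⟨a, b, hab⟩ := Multiset.card_eq_two.mp hsplit
  have hmono := A.charpoly_monic
  have ha' : a ∈ A.charpoly.roots := by rw [hab]; simp
  have hb' : b ∈ A.charpoly.roots := by rw [hab]; simp
  have ha : ‖a‖ ≤ 1 :=
    le_trans (root_norm_le A ((Polynomial.mem_roots hmono.ne_zero).mp ha')) hA.le
  have hb : ‖b‖ ≤ 1 :=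
    le_trans (root_norm_le A ((Polynomial.mem_roots hmono.ne_zero).mp hb')) hA.le
  have htr : A.trace = a + b := by
    rw [Matrix.trace_eq_sum_roots_charpoly, hab]; simp
  have hdet : A.det = a * b := by
    rw [Matrix.det_eq_prod_roots_charpoly, hab]; simp
  rw [htr, hdet]
  calc ‖a + b‖ ≤ ‖a‖ + ‖b‖ := norm_add_le a b
    _ ≤ 1 + ‖a‖ * ‖b‖ := by nlinarith [norm_nonneg a, norm_nonneg b]
    _ = 1 + ‖a * b‖ := by rw [norm_mul]

set_option synthInstance.maxHeartbeats 1000000 in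
lemma scalar_mem (z : ℂ) (hz : ‖z‖ < 1) : ((0 : ℂ), 2 * z, z ^ 2) ∈ pentablock := by
  refine ⟨z • 1, ?_, ?_⟩
  · have h1 : Matrix.toEuclideanCLM (𝕜 := ℂ) (n := Fin 2) (z • 1)
        = z • Matrix.toEuclideanCLM (𝕜 := ℂ) (n := Fin 2) 1 := map_smul _ _ _
    rw [opNorm, h1, map_one]
    calc ‖z • (1 : EuclideanSpace ℂ (Fin 2) →L[ℂ] EuclideanSpace ℂ (Fin 2))‖
        = ‖z‖ * ‖(1 : EuclideanSpace ℂ (Fin 2) →L[ℂ] EuclideanSpace ℂ (Fin 2))‖ :=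
          norm_smul z (1 : EuclideanSpace ℂ (Fin 2) →L[ℂ] EuclideanSpace ℂ (Fin 2))
      _ = ‖z‖ := by rw [norm_one, mul_one]
      _ < 1 := hz
  · have h10 : (z • (1 : Matrix (Fin 2) (Fin 2) ℂ)) 1 0 = 0 := by
      simp [Matrix.smul_apply, Matrix.one_apply]
    have htr : (z • (1 : Matrix (Fin 2) (Fin 2) ℂ)).trace = 2 * z := by
      simp [Matrix.trace_smul]; ring
    have hdet : (z • (1 : Matrix (Fin 2) (Fin 2) ℂ)).det = z ^ 2 := by
      simp [Matrix.det_smul]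
    rw [h10, htr, hdet]

lemma seq_tendsto : Filter.Tendsto (fun n : ℕ => ((cseq n : ℝ) : ℂ))
    Filter.atTop (nhds 1) := by
  have h : Filter.Tendsto cseq Filter.atTop (nhds 1) := by
    have := tendsto_one_div_add_atTop_nhds_zero_nat (𝕜 := ℝ)
    have h2 := (tendsto_const_nhds (x := (1:ℝ)) (f := Filter.atTop (α := ℕ))).sub this
    exact (by simpa [one_div] using h2 :
      Filter.Tendsto (fun n : ℕ => 1 - ((n : ℝ) + 1)⁻¹) Filter.atTop (nhds 1))
  have h3 := (Complex.continuous_ofReal.tendsto 1).comp h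
  exact h3

lemma seq_norm_lt (n : ℕ) : ‖((cseq n : ℝ) : ℂ)‖ < 1 := by
  have h1 : (0:ℝ) < (n + 1 : ℝ)⁻¹ := by positivity
  have h2 : (n + 1 : ℝ)⁻¹ ≤ 1 := by
    rw [inv_le_one_iff₀]; right; linarith [Nat.cast_nonneg (α := ℝ) n]
  rw [Complex.norm_real, Real.norm_eq_abs, cseq, abs_of_nonneg (by linarith)]
  linarith

lemma mem_closure_one : ((0 : ℂ), (2 : ℂ), (1 : ℂ)) ∈ closure pentablock := by
  refine mem_closure_of_tendsto (b := Filter.atTop (α := ℕ)) (f := fun n : ℕ =>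
    ((0 : ℂ), 2 * ((cseq n : ℝ) : ℂ), ((cseq n : ℝ) : ℂ) ^ 2)) ?_ ?_
  · have h := seq_tendsto
    have : Filter.Tendsto (fun n : ℕ =>
        ((0 : ℂ), 2 * ((cseq n : ℝ) : ℂ), ((cseq n : ℝ) : ℂ) ^ 2))
        Filter.atTop (nhds ((0:ℂ), 2 * (1:ℂ), (1:ℂ)^2)) := by
      exact Filter.Tendsto.prodMk_nhds tendsto_const_nhds
        (Filter.Tendsto.prodMk_nhds ((tendsto_const_nhds).mul h) (h.pow 2))
    simpa using this
  · filter_upwards with n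
    exact scalar_mem _ (seq_norm_lt n)

lemma mem_closure_I : ((0 : ℂ), 2 * Complex.I, (-1 : ℂ)) ∈ closure pentablock := by
  refine mem_closure_of_tendsto (b := Filter.atTop (α := ℕ)) (f := fun n : ℕ =>
    ((0 : ℂ), 2 * (((cseq n : ℝ) : ℂ) * Complex.I),
      (((cseq n : ℝ) : ℂ) * Complex.I) ^ 2)) ?_ ?_
  · have h := seq_tendsto
    have hI : Filter.Tendsto (fun n : ℕ => ((cseq n : ℝ) : ℂ) * Complex.I)
        Filter.atTop (nhds (1 * Complex.I)) := h.mul tendsto_const_nhds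
    have : Filter.Tendsto (fun n : ℕ =>
        ((0 : ℂ), 2 * (((cseq n : ℝ) : ℂ) * Complex.I),
          (((cseq n : ℝ) : ℂ) * Complex.I) ^ 2))
        Filter.atTop (nhds ((0:ℂ), 2 * (1 * Complex.I), (1 * Complex.I)^2)) :=
      Filter.Tendsto.prodMk_nhds tendsto_const_nhds
        (Filter.Tendsto.prodMk_nhds ((tendsto_const_nhds).mul hI) (hI.pow 2))
    have he : ((0:ℂ), 2 * (1 * Complex.I), (1 * Complex.I)^2)
        = ((0 : ℂ), 2 * Complex.I, (-1 : ℂ)) := by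
      simp [Complex.I_sq]
    rwa [he] at this
  · filter_upwards with n
    apply scalar_mem
    rw [norm_mul, Complex.norm_I, mul_one]
    exact seq_norm_lt n

lemma not_mem_closure : ((0 : ℂ), 1 + Complex.I, (0 : ℂ)) ∉ closure pentablock := by
  intro hmem
  have hsub : closure pentablock ⊆ {x : ℂ × ℂ × ℂ | ‖x.2.1‖ ≤ 1 + ‖x.2.2‖} := by
    apply closure_minimal
    · rintro x ⟨A, hA, rfl⟩
      exact trace_bound A hA
    · exact isClosed_le (by fun_prop) (by fun_prop)
  have h := hsub hmem
  simp only [Set.mem_setOf_eq, norm_zero, add_zero] at h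
  have h2 : ‖(1 + Complex.I)‖ ^ 2 = 2 := by
    rw [← Complex.normSq_eq_norm_sq]
    simp [Complex.normSq_apply]
    norm_num
  nlinarith [norm_nonneg (1 + Complex.I)]

theorem stmt_12 :
    ¬ Convex ℝ pentablock ∧ ¬ Convex ℝ (closure pentablock) ∧
      ((0 : ℂ), (2 : ℂ), (1 : ℂ)) ∈ closure pentablock ∧
      ((0 : ℂ), 2 * Complex.I, (-1 : ℂ)) ∈ closure pentablock ∧
      ((0 : ℂ), 1 + Complex.I, (0 : ℂ)) ∉ closure pentablock := by
  have hmid : (1/2 : ℝ) • (((0 : ℂ), (2 : ℂ), (1 : ℂ)))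
      + (1/2 : ℝ) • (((0 : ℂ), 2 * Complex.I, (-1 : ℂ)))
      = ((0 : ℂ), 1 + Complex.I, (0 : ℂ)) := by
    simp only [Prod.smul_mk, Prod.mk_add_mk, Complex.real_smul, Prod.mk.injEq]
    push_cast
    refine ⟨by ring, by ring, by ring⟩
  have hnc : ¬ Convex ℝ (closure pentablock) := by
    intro hconv
    have := hconv mem_closure_one mem_closure_I (by norm_num : (0:ℝ) ≤ 1/2)
      (by norm_num : (0:ℝ) ≤ 1/2) (by norm_num : (1/2 : ℝ) + 1/2 = 1)
    rw [hmid] at this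
    exact not_mem_closure this
  refine ⟨fun h => hnc h.closure, hnc, mem_closure_one, mem_closure_I, not_mem_closure⟩
end

section
/- The real pentablock 𝒫 ∩ ℝ³ is convex, where 𝒫 ∩ ℝ³ = {(a,s,p) ∈ ℝ³ : |p| < 1, |s| < 1+p, |a| < 1 - ½(1 + p - √((1+p)² - s²))}. -/
/-- Superadditivity of the geometric mean of linear combinations. -/
lemma sqrt_geom_mean_concave (a b c d t s : ℝ) (ha : 0 ≤ a) (hb : 0 ≤ b)
    (hc : 0 ≤ c) (hd : 0 ≤ d) (ht : 0 ≤ t) (hs : 0 ≤ s) :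
    t * Real.sqrt (a * b) + s * Real.sqrt (c * d) ≤
      Real.sqrt ((t * a + s * c) * (t * b + s * d)) := by
  have hab : Real.sqrt (a * b) ^ 2 = a * b := Real.sq_sqrt (mul_nonneg ha hb)
  have hcd : Real.sqrt (c * d) ^ 2 = c * d := Real.sq_sqrt (mul_nonneg hc hd)
  have hsab : 0 ≤ Real.sqrt (a * b) := Real.sqrt_nonneg _
  have hscd : 0 ≤ Real.sqrt (c * d) := Real.sqrt_nonneg _
  -- 2√(ab)√(cd) ≤ a*d + c*b
  have hkey : 2 * (Real.sqrt (a * b) * Real.sqrt (c * d)) ≤ a * d + c * b := by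
    have h1 : Real.sqrt (a * b) * Real.sqrt (c * d) = Real.sqrt ((a * d) * (c * b)) := by
      rw [← Real.sqrt_mul (mul_nonneg ha hb)]
      ring_nf
    rw [h1]
    have h2 : (a * d) * (c * b) ≤ ((a * d + c * b) / 2) ^ 2 := by nlinarith [sq_nonneg (a * d - c * b)]
    calc 2 * Real.sqrt ((a * d) * (c * b)) ≤ 2 * Real.sqrt (((a * d + c * b) / 2) ^ 2) := by
            have := Real.sqrt_le_sqrt h2
            linarith
      _ = a * d + c * b := by
            rw [Real.sqrt_sq (by positivity)]
            ring
  have hL : 0 ≤ t * Real.sqrt (a * b) + s * Real.sqrt (c * d) := by positivity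
  have h3 : (t * s) * (2 * (Real.sqrt (a * b) * Real.sqrt (c * d))) ≤ (t * s) * (a * d + c * b) :=
    mul_le_mul_of_nonneg_left hkey (mul_nonneg ht hs)
  have hsq : (t * Real.sqrt (a * b) + s * Real.sqrt (c * d)) ^ 2 ≤
      (t * a + s * c) * (t * b + s * d) := by
    calc (t * Real.sqrt (a * b) + s * Real.sqrt (c * d)) ^ 2
        = t ^ 2 * Real.sqrt (a * b) ^ 2 +
            (t * s) * (2 * (Real.sqrt (a * b) * Real.sqrt (c * d))) +
            s ^ 2 * Real.sqrt (c * d) ^ 2 := by ring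
      _ = t ^ 2 * (a * b) + (t * s) * (2 * (Real.sqrt (a * b) * Real.sqrt (c * d))) +
            s ^ 2 * (c * d) := by rw [hab, hcd]
      _ ≤ t ^ 2 * (a * b) + (t * s) * (a * d + c * b) + s ^ 2 * (c * d) := by linarith
      _ = (t * a + s * c) * (t * b + s * d) := by ring
  calc t * Real.sqrt (a * b) + s * Real.sqrt (c * d)
      = Real.sqrt ((t * Real.sqrt (a * b) + s * Real.sqrt (c * d)) ^ 2) := (Real.sqrt_sq hL).symm
    _ ≤ Real.sqrt ((t * a + s * c) * (t * b + s * d)) := Real.sqrt_le_sqrt hsq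

theorem stmt_16 :
    Convex ℝ {x : ℝ × ℝ × ℝ | |x.2.2| < 1 ∧ |x.2.1| < 1 + x.2.2 ∧
      |x.1| < 1 - (1 + x.2.2 - Real.sqrt ((1 + x.2.2) ^ 2 - x.2.1 ^ 2)) / 2} := by
  rintro ⟨a₁, s₁, p₁⟩ ⟨hp₁, hs₁, ha₁⟩ ⟨a₂, s₂, p₂⟩ ⟨hp₂, hs₂, ha₂⟩ t u ht hu htu
  rcases eq_or_lt_of_le ht with rfl | ht'
  · have : u = 1 := by linarith
    subst this
    simpa using ⟨hp₂, hs₂, ha₂⟩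
  rcases eq_or_lt_of_le hu with rfl | hu'
  · have : t = 1 := by linarith
    subst this
    simpa using ⟨hp₁, hs₁, ha₁⟩
  simp only [Set.mem_setOf_eq, Prod.smul_mk, Prod.mk_add_mk, smul_eq_mul] at *
  obtain ⟨hp₁', hp₁''⟩ := abs_lt.mp hp₁
  obtain ⟨hp₂', hp₂''⟩ := abs_lt.mp hp₂
  obtain ⟨hs₁', hs₁''⟩ := abs_lt.mp hs₁
  obtain ⟨hs₂', hs₂''⟩ := abs_lt.mp hs₂
  refine ⟨?_, ?_, ?_⟩
  · rw [abs_lt]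
    constructor <;> nlinarith
  · rw [abs_lt]
    constructor <;> nlinarith
  · -- key concavity step
    have e1 : (1 + p₁) ^ 2 - s₁ ^ 2 = (1 + p₁ - s₁) * (1 + p₁ + s₁) := by ring
    have e2 : (1 + p₂) ^ 2 - s₂ ^ 2 = (1 + p₂ - s₂) * (1 + p₂ + s₂) := by ring
    have e3 : (1 + (t * p₁ + u * p₂)) ^ 2 - (t * s₁ + u * s₂) ^ 2 =
        (t * (1 + p₁ - s₁) + u * (1 + p₂ - s₂)) * (t * (1 + p₁ + s₁) + u * (1 + p₂ + s₂)) := by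
      have hu2 : u = 1 - t := by linarith
      subst hu2; ring
    have hconc : t * Real.sqrt ((1 + p₁) ^ 2 - s₁ ^ 2) + u * Real.sqrt ((1 + p₂) ^ 2 - s₂ ^ 2) ≤
        Real.sqrt ((1 + (t * p₁ + u * p₂)) ^ 2 - (t * s₁ + u * s₂) ^ 2) := by
      rw [e1, e2, e3]
      exact sqrt_geom_mean_concave _ _ _ _ t u (by linarith) (by linarith) (by linarith)
        (by linarith) ht hu
    have habs : |t * a₁ + u * a₂| ≤ t * |a₁| + u * |a₂| := by
      calc |t * a₁ + u * a₂| ≤ |t * a₁| + |u * a₂| := abs_add_le _ _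
        _ = t * |a₁| + u * |a₂| := by rw [abs_mul, abs_mul, abs_of_nonneg ht, abs_of_nonneg hu]
    have h1 : t * |a₁| < t * (1 - (1 + p₁ - Real.sqrt ((1 + p₁) ^ 2 - s₁ ^ 2)) / 2) :=
      (mul_lt_mul_iff_right₀ ht').mpr ha₁
    have h2 : u * |a₂| < u * (1 - (1 + p₂ - Real.sqrt ((1 + p₂) ^ 2 - s₂ ^ 2)) / 2) :=
      (mul_lt_mul_iff_right₀ hu').mpr ha₂
    calc |t * a₁ + u * a₂| ≤ t * |a₁| + u * |a₂| := habs
      _ < t * (1 - (1 + p₁ - Real.sqrt ((1 + p₁) ^ 2 - s₁ ^ 2)) / 2)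
          + u * (1 - (1 + p₂ - Real.sqrt ((1 + p₂) ^ 2 - s₂ ^ 2)) / 2) := add_lt_add h1 h2
      _ ≤ 1 - (1 + (t * p₁ + u * p₂) -
            Real.sqrt ((1 + (t * p₁ + u * p₂)) ^ 2 - (t * s₁ + u * s₂) ^ 2)) / 2 := by
          nlinarith [hconc, htu]
end

section
/- The map h : 𝔻 → ℂ³, h(λ) = (λ², 0, λ), admits no holomorphic lifting H : 𝔻 → ℂ^{2×2} with H₂₁(λ) = λ², tr H(λ) = 0, det H(λ) = λ for all λ ∈ 𝔻. -/
theorem stmt_18 :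
    ¬ ∃ H : ℂ → Matrix (Fin 2) (Fin 2) ℂ,
        (∀ i j, DifferentiableOn ℂ (fun l => H l i j) (Metric.ball (0 : ℂ) 1)) ∧
        ∀ l ∈ Metric.ball (0 : ℂ) 1,
          H l 1 0 = l ^ 2 ∧ (H l).trace = 0 ∧ (H l).det = l := by
  rintro ⟨H, hdiff, hcond⟩
  -- key pointwise identity on the ball
  have key : ∀ l ∈ Metric.ball (0 : ℂ) 1,
      H l 0 0 * H l 0 0 = -l - l ^ 2 * H l 0 1 := by
    intro l hl
    obtain ⟨h10, htr, hdet⟩ := hcond l hl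
    rw [Matrix.trace_fin_two] at htr
    rw [Matrix.det_fin_two, h10] at hdet
    have h11 : H l 1 1 = -H l 0 0 := by linear_combination htr
    rw [h11] at hdet
    ring_nf
    ring_nf at hdet
    linear_combination -hdet
  have h0mem : (0 : ℂ) ∈ Metric.ball (0 : ℂ) 1 := by
    simp
  have hopen : IsOpen (Metric.ball (0 : ℂ) 1) := Metric.isOpen_ball
  -- η(0) = 0
  have hη0 : H 0 0 0 = 0 := by
    have := key 0 h0mem
    have h2 : H 0 0 0 * H 0 0 0 = 0 := by
      rw [this]; ring
    exact mul_self_eq_zero.mp h2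
  -- differentiability at 0
  have hη : DifferentiableAt ℂ (fun l => H l 0 0) 0 :=
    (hdiff 0 0).differentiableAt (hopen.mem_nhds h0mem)
  have hg : DifferentiableAt ℂ (fun l => H l 0 1) 0 :=
    (hdiff 0 1).differentiableAt (hopen.mem_nhds h0mem)
  -- LHS has derivative 0 at 0
  have hL : HasDerivAt (fun l => H l 0 0 * H l 0 0)
      (deriv (fun l => H l 0 0) 0 * H 0 0 0 + H 0 0 0 * deriv (fun l => H l 0 0) 0) 0 :=
    hη.hasDerivAt.mul hη.hasDerivAt
  have hL0 : HasDerivAt (fun l => H l 0 0 * H l 0 0) 0 0 := by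
    have : deriv (fun l => H l 0 0) 0 * H 0 0 0 + H 0 0 0 * deriv (fun l => H l 0 0) 0 = 0 := by
      rw [hη0]; ring
    rwa [this] at hL
  -- RHS has derivative -1 at 0
  have hR : HasDerivAt (fun l : ℂ => -l - l ^ 2 * H l 0 1) (-1) 0 := by
    have hpow : HasDerivAt (fun l : ℂ => l ^ 2) ((2 : ℕ) * (0 : ℂ) ^ (2 - 1)) 0 :=
      hasDerivAt_pow 2 0
    have hmul : HasDerivAt (fun l : ℂ => l ^ 2 * H l 0 1)
        ((2 : ℕ) * (0 : ℂ) ^ (2 - 1) * H 0 0 1 + (0 : ℂ) ^ 2 * deriv (fun l => H l 0 1) 0) 0 :=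
      hpow.mul hg.hasDerivAt
    have hid : HasDerivAt (fun l : ℂ => -l) (-1) 0 := (hasDerivAt_id 0).neg
    have := hid.sub hmul
    exact this.congr_deriv (by simp)
  -- transfer: LHS = RHS eventually, so derivatives agree
  have heq : (fun l => H l 0 0 * H l 0 0) =ᶠ[nhds 0] (fun l : ℂ => -l - l ^ 2 * H l 0 1) :=
    Filter.eventuallyEq_of_mem (hopen.mem_nhds h0mem) key
  have hL0' : HasDerivAt (fun l : ℂ => -l - l ^ 2 * H l 0 1) 0 0 :=
    hL0.congr_of_eventuallyEq heq.symm
  have : (0 : ℂ) = -1 := hL0'.unique hR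
  norm_num at this
end

section
/- For each ω ∈ ℂ with |ω| = 1, η ∈ ℂ with |η| = 1, and α ∈ 𝔻, the map sending (a, λ₁+λ₂, λ₁λ₂) to ( ωη(1-|α|²)a / (1 - conj(α)(λ₁+λ₂) + conj(α)²λ₁λ₂), υ(λ₁)+υ(λ₂), υ(λ₁)υ(λ₂) ), where υ(λ) = η(λ-α)/(1-conj(α)λ), maps the pentablock 𝒫 into 𝒫. -/
theorem key_id {E : Type*} [NormedAddCommGroup E] [InnerProductSpace ℂ E]
    (T : E →L[ℂ] E) (α : ℂ) (y : E) :
    ‖y - (starRingEnd ℂ) α • T y‖^2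
      = ‖T y - α • y‖^2 + (1 - ‖α‖^2) * (‖y‖^2 - ‖T y‖^2) := by
  have h1 := @norm_sub_sq ℂ _ _ _ _ y ((starRingEnd ℂ) α • T y)
  have h2 := @norm_sub_sq ℂ _ _ _ _ (T y) (α • y)
  rw [inner_smul_right] at h1 h2
  rw [norm_smul] at h1 h2
  rw [show (inner ℂ (T y) y : ℂ) = (starRingEnd ℂ) (inner ℂ y (T y)) from
    (inner_conj_symm (T y) y).symm] at h2
  simp only [RCLike.norm_conj] at h1
  set w := @inner ℂ _ _ y (T y) with hw
  rw [h1, h2]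
  have : RCLike.re ((starRingEnd ℂ) α * w) = RCLike.re (α * (starRingEnd ℂ) w) := by
    rw [show α * (starRingEnd ℂ) w = (starRingEnd ℂ) ((starRingEnd ℂ) α * w) by
      rw [map_mul, Complex.conj_conj], RCLike.conj_re]
  rw [this]
  ring

set_option maxHeartbeats 1000000 in
theorem mobius_contraction {E : Type*} [NormedAddCommGroup E] [InnerProductSpace ℂ E]
    [Nontrivial E] (T R : E →L[ℂ] E) (α : ℂ) (hα : ‖α‖ < 1) (hT : ‖T‖ < 1)
    (hRinv : ∀ x, R x - (starRingEnd ℂ) α • T (R x) = x) :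
    ‖(T - α • (1 : E →L[ℂ] E)) * R‖ < 1 := by
  obtain ⟨aa, haa⟩ : ∃ aa, aa = ‖α‖ := ⟨_, rfl⟩
  obtain ⟨b, hb⟩ : ∃ b, b = ‖T‖ := ⟨_, rfl⟩
  rw [← haa] at hα
  rw [← hb] at hT
  have hb0 : 0 ≤ b := hb ▸ norm_nonneg _
  have ha0 : 0 ≤ aa := haa ▸ norm_nonneg _
  obtain ⟨M, hM⟩ : ∃ M, M = ‖(1 : E →L[ℂ] E) - (starRingEnd ℂ) α • T‖ := ⟨_, rfl⟩
  have hM1 : 1 - aa * b ≤ M := by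
    have h := norm_sub_norm_le (1 : E →L[ℂ] E) ((starRingEnd ℂ) α • T)
    rw [norm_one, norm_smul ((starRingEnd ℂ) α) T, RCLike.norm_conj,
      ← haa, ← hb, ← hM] at h
    exact h
  have hMpos : 0 < M := lt_of_lt_of_le (by nlinarith) hM1
  obtain ⟨ε, hε⟩ : ∃ ε : ℝ, ε = (1 - aa^2) * (1 - b^2) := ⟨_, rfl⟩
  have hεpos : 0 < ε := hε ▸ mul_pos (by nlinarith) (by nlinarith)
  have hεM : ε ≤ M^2 := by
    have h1ab : 0 ≤ 1 - aa * b := by nlinarith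
    have h2 : ε ≤ (1 - aa * b)^2 := by rw [hε]; nlinarith [sq_nonneg (aa - b)]
    nlinarith
  obtain ⟨k, hk⟩ : ∃ k, k = Real.sqrt (1 - ε / M^2) := ⟨_, rfl⟩
  have hknn : 0 ≤ k := hk ▸ Real.sqrt_nonneg _
  have hk2 : k^2 = 1 - ε / M^2 := by
    rw [hk]
    exact Real.sq_sqrt (by rw [sub_nonneg, div_le_one (by positivity)]; exact hεM)
  have hklt : k < 1 := by
    have hlt : k^2 < 1 := by
      rw [hk2]
      have : 0 < ε / M^2 := by positivity
      linarith
    nlinarith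
  have hbound : ∀ x, ‖((T - α • (1 : E →L[ℂ] E)) * R) x‖ ≤ k * ‖x‖ := by
    intro x
    have hxy : R x - (starRingEnd ℂ) α • T (R x) = x := hRinv x
    obtain ⟨y, hy⟩ : ∃ y, y = R x := ⟨_, rfl⟩
    rw [← hy] at hxy
    have happ : ((T - α • (1 : E →L[ℂ] E)) * R) x = T y - α • y := by
      rw [ContinuousLinearMap.mul_apply, ← hy]
      simp
    rw [happ]
    have hid : ‖x‖^2 = ‖T y - α • y‖^2 + (1 - aa^2) * (‖y‖^2 - ‖T y‖^2) := by
      rw [← hxy, haa]; exact key_id T α y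
    have hTy : ‖T y‖ ≤ b * ‖y‖ := by rw [hb]; exact T.le_opNorm y
    have hxM : ‖x‖ ≤ M * ‖y‖ := by
      have h' : ((1 : E →L[ℂ] E) - (starRingEnd ℂ) α • T) y = x := by
        simpa using hxy
      rw [← h', hM]
      exact ContinuousLinearMap.le_opNorm _ _
    have hy0 : 0 ≤ ‖y‖ := norm_nonneg _
    have hx0 : 0 ≤ ‖x‖ := norm_nonneg _
    have hTy0 : 0 ≤ ‖T y‖ := norm_nonneg _
    have hsq : ‖T y‖ ^ 2 ≤ b ^ 2 * ‖y‖ ^ 2 := by nlinarith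
    have h1 : ‖T y - α • y‖^2 + ε * ‖y‖^2 ≤ ‖x‖^2 := by
      have hnn : (0:ℝ) ≤ 1 - aa^2 := by nlinarith
      nlinarith [mul_le_mul_of_nonneg_left hsq hnn]
    have h2 : ‖x‖^2 ≤ M^2 * ‖y‖^2 := by nlinarith
    have h3 : ‖T y - α • y‖^2 ≤ k^2 * ‖x‖^2 := by
      rw [hk2]
      have hdiv : ε / M^2 * ‖x‖^2 ≤ ε * ‖y‖^2 := by
        rw [div_mul_eq_mul_div, div_le_iff₀ (by positivity)]
        nlinarith
      nlinarith
    nlinarith [norm_nonneg (T y - α • y), mul_nonneg hknn hx0]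
  calc ‖(T - α • (1 : E →L[ℂ] E)) * R‖ ≤ k := ContinuousLinearMap.opNorm_le_bound _ hknn hbound
    _ < 1 := hklt

theorem eig_lt (A : Matrix (Fin 2) (Fin 2) ℂ) (l₁ l₂ : ℂ)
    (hs : l₁ + l₂ = A 0 0 + A 1 1) (hp : l₁ * l₂ = A 0 0 * A 1 1 - A 0 1 * A 1 0)
    (hA : ‖Matrix.toEuclideanCLM (𝕜 := ℂ) A‖ < 1) : ‖l₁‖ < 1 := by
  have hmem : l₁ ∈ spectrum ℂ A := by
    rw [spectrum.mem_iff]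
    intro hu
    rw [Matrix.isUnit_iff_isUnit_det] at hu
    have hdet : (algebraMap ℂ (Matrix (Fin 2) (Fin 2) ℂ) l₁ - A).det = 0 := by
      rw [Matrix.det_fin_two]
      simp [Matrix.algebraMap_matrix_apply]
      linear_combination l₁ * hs - hp
    rw [hdet] at hu
    exact hu.ne_zero rfl
  rw [← AlgEquiv.spectrum_eq (Matrix.toEuclideanCLM (𝕜 := ℂ)) A] at hmem
  exact lt_of_le_of_lt (spectrum.norm_le_norm_of_mem hmem) hA

set_option maxHeartbeats 1000000 in
set_option synthInstance.maxHeartbeats 400000 in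
theorem stmt_19 (ω η α : ℂ) (hω : ‖ω‖ = 1) (hη : ‖η‖ = 1) (hα : ‖α‖ < 1)
    (υ : ℂ → ℂ) (hυ : ∀ l, υ l = η * (l - α) / (1 - (starRingEnd ℂ) α * l))
    (a l₁ l₂ : ℂ) (h : (a, l₁ + l₂, l₁ * l₂) ∈ pentablock) :
    (ω * η * ((1 - ‖α‖ ^ 2 : ℝ) : ℂ) * a /
        (1 - (starRingEnd ℂ) α * (l₁ + l₂) + (starRingEnd ℂ) α ^ 2 * (l₁ * l₂)),
      υ l₁ + υ l₂, υ l₁ * υ l₂) ∈ pentablock := by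
  obtain ⟨A, hA, hx⟩ := h
  obtain ⟨ha, hs, hp⟩ : a = A 1 0 ∧ (l₁ + l₂ = A 0 0 + A 1 1) ∧
      (l₁ * l₂ = A 0 0 * A 1 1 - A 0 1 * A 1 0) := by
    rw [Prod.ext_iff, Prod.ext_iff, Matrix.trace_fin_two, Matrix.det_fin_two] at hx
    exact ⟨hx.1, hx.2.1, hx.2.2⟩
  rw [opNorm] at hA
  set α' := (starRingEnd ℂ) α with hα'
  -- eigenvalues in the disc
  have hl₁ : ‖l₁‖ < 1 := eig_lt A l₁ l₂ hs (by linear_combination hp) hA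
  have hl₂ : ‖l₂‖ < 1 := eig_lt A l₂ l₁ (by linear_combination hs) (by linear_combination hp) hA
  -- denominators
  have hden : ∀ l : ℂ, ‖l‖ < 1 → 1 - α' * l ≠ 0 := by
    intro l hl h0
    have h1 : α' * l = 1 := by linear_combination -h0
    have := congrArg norm h1
    rw [norm_mul, norm_one, hα', RCLike.norm_conj] at this
    nlinarith [norm_nonneg l, norm_nonneg α]
  have hden₁ := hden l₁ hl₁
  have hden₂ := hden l₂ hl₂
  obtain ⟨d, hdd⟩ : ∃ d : ℂ, d = 1 - α' * (l₁ + l₂) + α' ^ 2 * (l₁ * l₂) := ⟨_, rfl⟩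
  have hdfact : d = (1 - α' * l₁) * (1 - α' * l₂) := by rw [hdd]; ring
  have hd : d ≠ 0 := by rw [hdfact]; exact mul_ne_zero hden₁ hden₂
  -- the matrices
  set N : Matrix (Fin 2) (Fin 2) ℂ := 1 - α' • A with hN
  set K : Matrix (Fin 2) (Fin 2) ℂ :=
    d⁻¹ • !![1 - α' * A 1 1, α' * A 0 1; α' * A 1 0, 1 - α' * A 0 0] with hK
  have hNentry : N 0 0 = 1 - α' * A 0 0 ∧ N 0 1 = -(α' * A 0 1) ∧
      N 1 0 = -(α' * A 1 0) ∧ N 1 1 = 1 - α' * A 1 1 := by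
    refine ⟨?_, ?_, ?_, ?_⟩ <;>
      simp [hN, Matrix.sub_apply, Matrix.smul_apply, Matrix.one_apply]
  have hNK : N * K = 1 := by
    obtain ⟨e00, e01, e10, e11⟩ := hNentry
    ext i j
    fin_cases i <;> fin_cases j <;>
      simp [Matrix.mul_apply, Fin.sum_univ_two, hK, Matrix.one_apply, e00, e01, e10, e11]
    · field_simp
      linear_combination α' * hs - α' ^ 2 * hp - hdd
    · ring
    · ring
    · field_simp
      linear_combination α' * hs - α' ^ 2 * hp - hdd
  -- the Möbius image matrix
  obtain ⟨C, hCdef⟩ : ∃ C, C = η • ((A - α • (1 : Matrix (Fin 2) (Fin 2) ℂ)) * K) := ⟨_, rfl⟩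
  have hφC : ‖Matrix.toEuclideanCLM (𝕜 := ℂ) C‖ < 1 := by
    have hmap : Matrix.toEuclideanCLM (𝕜 := ℂ) C
        = η • ((Matrix.toEuclideanCLM (𝕜 := ℂ) A
            - α • (1 : EuclideanSpace ℂ (Fin 2) →L[ℂ] EuclideanSpace ℂ (Fin 2)))
          * Matrix.toEuclideanCLM (𝕜 := ℂ) K) := by
      rw [hCdef, _root_.map_smul, _root_.map_mul, _root_.map_sub, _root_.map_smul,
        _root_.map_one]
    rw [hmap, norm_smul η ((Matrix.toEuclideanCLM (𝕜 := ℂ) A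
        - α • (1 : EuclideanSpace ℂ (Fin 2) →L[ℂ] EuclideanSpace ℂ (Fin 2)))
      * Matrix.toEuclideanCLM (𝕜 := ℂ) K), hη, one_mul]
    refine mobius_contraction _ _ α hα hA ?_
    intro x
    have h1 : Matrix.toEuclideanCLM (𝕜 := ℂ) N (Matrix.toEuclideanCLM (𝕜 := ℂ) K x) = x := by
      rw [← ContinuousLinearMap.mul_apply, ← _root_.map_mul, hNK, _root_.map_one,
        ContinuousLinearMap.one_apply]
    have h2 : Matrix.toEuclideanCLM (𝕜 := ℂ) N
        = 1 - α' • Matrix.toEuclideanCLM (𝕜 := ℂ) A := by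
      rw [hN, _root_.map_sub, _root_.map_one, _root_.map_smul]
    rw [h2] at h1
    simpa [hα'] using h1
  -- the unitary
  have hωc : (starRingEnd ℂ) ω * ω = 1 := by
    rw [RCLike.conj_mul, hω]
    norm_num
  obtain ⟨U, hU⟩ : ∃ U : Matrix (Fin 2) (Fin 2) ℂ, U = !![1, 0; 0, ω] := ⟨_, rfl⟩
  have hsU : star U = !![1, 0; 0, (starRingEnd ℂ) ω] := by
    rw [hU, Matrix.star_eq_conjTranspose]
    ext i j
    fin_cases i <;> fin_cases j <;>
      simp [Matrix.conjTranspose_apply]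
  have hUU : star U * U = 1 ∧ U * star U = 1 := by
    constructor <;>
      · ext i j
        fin_cases i <;> fin_cases j <;>
          simp [hU, hsU, Matrix.mul_apply, Fin.sum_univ_two, Matrix.one_apply] <;>
            linear_combination hωc
  obtain ⟨B, hBdef⟩ : ∃ B, B = U * C * star U := ⟨_, rfl⟩
  have hBnorm : opNorm B < 1 := by
    rw [opNorm, hBdef, _root_.map_mul, _root_.map_mul]
    have hu : Matrix.toEuclideanCLM (𝕜 := ℂ) U ∈
        unitary (EuclideanSpace ℂ (Fin 2) →L[ℂ] EuclideanSpace ℂ (Fin 2)) := by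
      rw [Unitary.mem_iff]
      constructor
      · rw [← map_star, ← _root_.map_mul, hUU.1, _root_.map_one]
      · rw [← map_star, ← _root_.map_mul, hUU.2, _root_.map_one]
    rw [map_star]
    calc ‖Matrix.toEuclideanCLM (𝕜 := ℂ) U * Matrix.toEuclideanCLM (𝕜 := ℂ) C *
            star (Matrix.toEuclideanCLM (𝕜 := ℂ) U)‖
        = ‖Matrix.toEuclideanCLM (𝕜 := ℂ) C *
            star (Matrix.toEuclideanCLM (𝕜 := ℂ) U)‖ := by
          rw [mul_assoc]
          exact CStarRing.norm_mem_unitary_mul _ hu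
      _ = ‖Matrix.toEuclideanCLM (𝕜 := ℂ) C‖ :=
          CStarRing.norm_mul_coe_unitary _ ⟨_, Unitary.star_mem hu⟩
      _ < 1 := hφC
  -- entries of C
  have hC00 : C 0 0 = η * ((A 0 0 - α) * (d⁻¹ * (1 - α' * A 1 1))
      + A 0 1 * (d⁻¹ * (α' * A 1 0))) := by
    rw [hCdef, hK]
    simp [Matrix.mul_apply, Fin.sum_univ_two, Matrix.one_apply]
  have hC01 : C 0 1 = η * ((A 0 0 - α) * (d⁻¹ * (α' * A 0 1))
      + A 0 1 * (d⁻¹ * (1 - α' * A 0 0))) := by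
    rw [hCdef, hK]
    simp [Matrix.mul_apply, Fin.sum_univ_two, Matrix.one_apply]
  have hC10 : C 1 0 = η * (A 1 0 * (d⁻¹ * (1 - α' * A 1 1))
      + (A 1 1 - α) * (d⁻¹ * (α' * A 1 0))) := by
    rw [hCdef, hK]
    simp [Matrix.mul_apply, Fin.sum_univ_two, Matrix.one_apply]
  have hC11 : C 1 1 = η * (A 1 0 * (d⁻¹ * (α' * A 0 1))
      + (A 1 1 - α) * (d⁻¹ * (1 - α' * A 0 0))) := by
    rw [hCdef, hK]
    simp [Matrix.mul_apply, Fin.sum_univ_two, Matrix.one_apply]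
  -- entries of B
  have hB00 : B 0 0 = C 0 0 := by
    rw [hBdef, hsU, hU]
    simp [Matrix.mul_apply, Fin.sum_univ_two, Matrix.vecMul, dotProduct]
  have hB01 : B 0 1 = C 0 1 * (starRingEnd ℂ) ω := by
    rw [hBdef, hsU, hU]
    simp [Matrix.mul_apply, Fin.sum_univ_two, Matrix.vecMul, dotProduct]
  have hB10 : B 1 0 = ω * C 1 0 := by
    rw [hBdef, hsU, hU]
    simp [Matrix.mul_apply, Fin.sum_univ_two, Matrix.vecMul, dotProduct]
  have hB11 : B 1 1 = ω * C 1 1 * (starRingEnd ℂ) ω := by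
    rw [hBdef, hsU, hU]
    simp [Matrix.mul_apply, Fin.sum_univ_two, Matrix.vecMul, dotProduct]
  -- key scalar identities
  have hXd : (1 - α' * A 0 0) * (1 - α' * A 1 1) - α' ^ 2 * (A 0 1 * A 1 0) = d := by
    linear_combination α' * hs - α' ^ 2 * hp - hdd
  have htr : (C 0 0 + C 1 1) * d = η * ((A 0 0 + A 1 1) - 2 * α
      + α * α' * (A 0 0 + A 1 1) - 2 * α' * (A 0 0 * A 1 1 - A 0 1 * A 1 0)) := by
    rw [hC00, hC11]
    field_simp
    ring
  rw [← hs, ← hp] at htr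
  have hdet2 : (C 0 0 * C 1 1 - C 0 1 * C 1 0) * (d * d)
      = η ^ 2 * ((A 0 0 * A 1 1 - A 0 1 * A 1 0) - α * (A 0 0 + A 1 1) + α ^ 2)
        * ((1 - α' * A 0 0) * (1 - α' * A 1 1) - α' ^ 2 * (A 0 1 * A 1 0)) := by
    rw [hC00, hC01, hC10, hC11]
    field_simp
    ring
  rw [hXd, ← hs, ← hp] at hdet2
  have hdet3 : (C 0 0 * C 1 1 - C 0 1 * C 1 0) * d
      = η ^ 2 * ((l₁ * l₂) - α * (l₁ + l₂) + α ^ 2) :=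
    mul_right_cancel₀ hd (by linear_combination hdet2)
  have hcast : ((1 - ‖α‖ ^ 2 : ℝ) : ℂ) = 1 - α' * α := by
    rw [hα', Complex.conj_mul']
    push_cast
    ring
  refine ⟨B, hBnorm, ?_⟩
  rw [Prod.ext_iff, Prod.ext_iff]
  refine ⟨?_, ?_, ?_⟩
  · show ω * η * ((1 - ‖α‖ ^ 2 : ℝ) : ℂ) * a / (1 - α' * (l₁ + l₂) + α' ^ 2 * (l₁ * l₂)) = B 1 0
    rw [hcast, ← hdd, hB10, hC10, ha]
    field_simp
    ring
  · show υ l₁ + υ l₂ = B.trace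
    rw [Matrix.trace_fin_two, hB00, hB11, hυ l₁, hυ l₂]
    have h11 : ω * C 1 1 * (starRingEnd ℂ) ω = C 1 1 := by
      linear_combination (C 1 1) * hωc
    rw [h11]
    have hden₁' : 1 - l₁ * α' ≠ 0 := by rwa [mul_comm]
    have hden₂' : 1 - l₂ * α' ≠ 0 := by rwa [mul_comm]
    field_simp
    linear_combination (C 0 0 + C 1 1) * hdfact - htr
  · show υ l₁ * υ l₂ = B.det
    rw [Matrix.det_fin_two, hB00, hB01, hB10, hB11, hυ l₁, hυ l₂]
    have hdetB : C 0 0 * (ω * C 1 1 * (starRingEnd ℂ) ω)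
        - C 0 1 * (starRingEnd ℂ) ω * (ω * C 1 0) = C 0 0 * C 1 1 - C 0 1 * C 1 0 := by
      linear_combination (C 0 0 * C 1 1 - C 0 1 * C 1 0) * hωc
    rw [hdetB]
    have hden₁' : 1 - l₁ * α' ≠ 0 := by rwa [mul_comm]
    have hden₂' : 1 - l₂ * α' ≠ 0 := by rwa [mul_comm]
    field_simp
    linear_combination (C 0 0 * C 1 1 - C 0 1 * C 1 0) * hdfact - hdet3
end
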